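/- arXiv:1401.3142 — 8 statements merged into one kernel-verified Lean document; each statement's English description precedes it below -/
import Mathlib

section
/- Let G be a group and U a subgroup of G which is commensurated by G. Suppose that G is generated by finitely many left cosets of U, and that UK = G, where K denotes the set of all elements of G that centralise some finite-index subgroup of U. Then the normal core of U in G (the intersection of all conjugates gUg^{-1}, g ∈ G) has finite index in U. -/
open Pointwise

/-- A subgroup `K` is commensurated by `G` if each of its conjugates is commensurate with it. -/
def CommensuratedBy {G : Type*} [Group G] (K : Subgroup G) : Prop :=
  ∀ g : G, Subgroup.Commensurable (K.map (MulAut.conj g).toMonoidHom) K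

/-- Let `(G,U)` be a Hecke pair with `G` generated by finitely many cosets
of `U`, and suppose `UK = G` where `K` is the set of elements centralising a finite-index
subgroup of `U`. Then the normal core of `U` in `G` has finite index in `U`. -/
theorem normalCore_finite_index_of_UK_eq_G
    (G : Type*) [Group G] (U : Subgroup G) (hcomm : CommensuratedBy U)
    (hgen : ∃ F : Finset G, Subgroup.closure ((F : Set G) * (U : Set G)) = ⊤)
    (hUK : ∀ g : G, ∃ u ∈ U, ∃ k : G,
      (∃ V : Subgroup G, V ≤ U ∧ V.relIndex U ≠ 0 ∧ ∀ v ∈ V, k * v = v * k) ∧ g = u * k) :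
    U.normalCore.relIndex U ≠ 0 := by
  obtain ⟨F, hF⟩ := hgen
  -- choose decompositions g = u g * k g with k g centralising V g
  choose u hu k hk hg using hUK
  choose V hVU hVrel hVcent using hk
  -- a finite-index subgroup Vi of U contained in each V f, f ∈ F
  obtain ⟨Vi, hViU, hVirel, hViVf⟩ :
      ∃ Vi : Subgroup G, Vi ≤ U ∧ Vi.relIndex U ≠ 0 ∧ ∀ f ∈ F, Vi ≤ V f := by
    refine ⟨U ⊓ ⨅ f : F, V f, inf_le_left, ?_, ?_⟩
    · refine Subgroup.relIndex_inf_ne_zero ?_ ?_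
      · rw [Subgroup.relIndex_self]; exact one_ne_zero
      · exact Subgroup.relIndex_iInf_ne_zero fun f => hVrel f
    · exact fun f hf => le_trans inf_le_right (iInf_le (fun f : F => V f) ⟨f, hf⟩)
  -- the normal core M of Vi inside U, pushed back to G
  obtain ⟨M, hMU, hMrel, hMVi, hMnormU⟩ :
      ∃ M : Subgroup G, M ≤ U ∧ M.relIndex U ≠ 0 ∧ M ≤ Vi ∧
        ∀ w ∈ U, ∀ m ∈ M, w * m * w⁻¹ ∈ M := by
    haveI : (Vi.subgroupOf U).FiniteIndex := ⟨hVirel⟩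
    refine ⟨((Vi.subgroupOf U).normalCore).map U.subtype, ?_, ?_, ?_, ?_⟩
    · rintro x ⟨n, _, rfl⟩; exact n.2
    · rw [Subgroup.relIndex, Subgroup.subgroupOf,
        Subgroup.comap_map_eq_self_of_injective U.subtype_injective]
      exact Subgroup.FiniteIndex.index_ne_zero
    · have h1 : ((Vi.subgroupOf U).normalCore).map U.subtype ≤
          (Vi.subgroupOf U).map U.subtype :=
        Subgroup.map_mono (Subgroup.normalCore_le _)
      rw [Subgroup.subgroupOf_map_subtype] at h1
      exact h1.trans inf_le_left
    · rintro w hw m ⟨n, hn, rfl⟩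
      exact ⟨⟨w, hw⟩ * n * ⟨w, hw⟩⁻¹,
        (Subgroup.normalCore_normal _).conj_mem n hn ⟨w, hw⟩, rfl⟩
  -- generators conjugate M into M
  have hconj : ∀ f ∈ F, ∀ m ∈ M, f * m * f⁻¹ ∈ M := by
    intro f hf m hm
    have hmVf : m ∈ V f := hViVf f hf (hMVi hm)
    have hcent := hVcent f m hmVf
    have hc : k f * m * (k f)⁻¹ = m := by rw [hcent]; group
    have e1 : f * m * f⁻¹ = u f * (k f * m * (k f)⁻¹) * (u f)⁻¹ := by
      conv_lhs => rw [hg f]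
      group
    rw [hc] at e1
    rw [e1]
    exact hMnormU _ (hu f) m hm
  have hconjinv : ∀ f ∈ F, ∀ m ∈ M, f⁻¹ * m * f ∈ M := by
    intro f hf m hm
    have hm' : (u f)⁻¹ * m * u f ∈ M := by
      have := hMnormU ((u f)⁻¹) (U.inv_mem (hu f)) m hm
      simpa using this
    have hmVf : (u f)⁻¹ * m * u f ∈ V f := hViVf f hf (hMVi hm')
    have hcent := hVcent f _ hmVf
    have h2 : (k f)⁻¹ * ((u f)⁻¹ * m * u f) * k f = (u f)⁻¹ * m * u f := by
      rw [mul_assoc, ← hcent]; group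
    have key : f⁻¹ * m * f = (k f)⁻¹ * ((u f)⁻¹ * m * u f) * k f := by
      conv_lhs => rw [hg f]
      group
    rw [key, h2]; exact hm'
  -- M is normal in G: the normalizer contains the generating set
  have hnorm : ∀ g : G, ∀ m ∈ M, g * m * g⁻¹ ∈ M := by
    have htop : Subgroup.normalizer (M : Set G) = ⊤ := by
      rw [← top_le_iff, ← hF, Subgroup.closure_le]
      rintro s ⟨f, hf, w, hw, rfl⟩
      rw [SetLike.mem_coe, Subgroup.mem_normalizer_iff]
      show ∀ m, m ∈ M ↔ (f * w) * m * (f * w)⁻¹ ∈ M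
      intro m
      constructor
      · intro hm
        have h1 : w * m * w⁻¹ ∈ M := hMnormU w hw m hm
        have h2 := hconj f hf _ h1
        have h3 : f * w * m * (f * w)⁻¹ = f * (w * m * w⁻¹) * f⁻¹ := by group
        rw [h3]; exact h2
      · intro hm
        have h1 := hconjinv f hf _ hm
        have h2 : f⁻¹ * (f * w * m * (f * w)⁻¹) * f = w * m * w⁻¹ := by group
        rw [h2] at h1
        have h3 := hMnormU (w⁻¹) (U.inv_mem hw) _ h1
        have h4 : w⁻¹ * (w * m * w⁻¹) * w⁻¹⁻¹ = m := by group
        rwa [h4] at h3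
    intro g m hm
    have hg' : g ∈ Subgroup.normalizer (M : Set G) := htop ▸ Subgroup.mem_top g
    exact (Subgroup.mem_normalizer_iff.mp hg' m).mp hm
  -- hence M ≤ U.normalCore
  have hMcore : M ≤ U.normalCore := by
    intro m hm b
    exact hMU (hnorm b m hm)
  intro h0
  exact hMrel (Nat.eq_zero_of_zero_dvd (h0 ▸ Subgroup.relIndex_dvd_of_le_left U hMcore))
end

section
/- Let G be a t.d.l.c. group in which every infinite locally normal subgroup that is commensurated by G is open. Then every closed normal subgroup of G is either discrete or open. -/
open Set Pointwise

section VanDantzig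

variable {G : Type*} [Group G] [TopologicalSpace G] [IsTopologicalGroup G]

/-- Variant of `TopologicalGroup.exist_mul_closure_nhd` assuming only that `W` itself is
compact, rather than that the whole group is compact. -/
lemma exist_mul_closure_nhd' {W : Set G} (Wcomp : IsCompact W) (Wopen : IsOpen W) :
    ∃ T ∈ nhds (1 : G), W * T ⊆ W := by
  apply Wcomp.induction_on (p := fun S ↦ ∃ T ∈ nhds (1 : G), S * T ⊆ W)
    ⟨Set.univ, by simp only [Filter.univ_mem, Set.empty_mul, Set.empty_subset, and_self]⟩
    (fun _ _ huv ⟨T, hT, mem⟩ ↦ ⟨T, hT, (Set.mul_subset_mul_right huv).trans mem⟩)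
    fun U V ⟨T₁, hT₁, mem1⟩ ⟨T₂, hT₂, mem2⟩ ↦ ⟨T₁ ∩ T₂, Filter.inter_mem hT₁ hT₂, by
      rw [Set.union_mul]
      exact Set.union_subset ((Set.mul_subset_mul_left Set.inter_subset_left).trans mem1)
        ((Set.mul_subset_mul_left Set.inter_subset_right).trans mem2)⟩
  intro x memW
  have : (x, 1) ∈ (fun p : G × G ↦ p.1 * p.2) ⁻¹' W := by simp [memW]
  rcases isOpen_prod_iff.mp (continuous_mul.isOpen_preimage W Wopen) x 1 this with
    ⟨U, V, Uopen, Vopen, xmemU, onememV, prodsub⟩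
  have h6 : U * V ⊆ W := Set.mul_subset_iff.mpr (fun _ hx _ hy ↦ prodsub (Set.mk_mem_prod hx hy))
  exact ⟨U ∩ W, ⟨U, Uopen.mem_nhds xmemU, W, fun _ a ↦ a, rfl⟩,
    V, Vopen.mem_nhds onememV, fun _ a ↦ h6 ((Set.mul_subset_mul_right Set.inter_subset_left) a)⟩

/-- From a compact open neighbourhood of `1`, produce an open subgroup inside it. -/
lemma exist_openSubgroup_sub_compact_open_nhd_of_one {W : Set G} (Wcomp : IsCompact W)
    (Wopen : IsOpen W) (einW : (1 : G) ∈ W) :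
    ∃ H : Subgroup G, IsOpen (H : Set G) ∧ (H : Set G) ⊆ W := by
  rcases exist_mul_closure_nhd' Wcomp Wopen with ⟨S, Smemnhds, mulclose⟩
  rcases mem_nhds_iff.mp Smemnhds with ⟨U, UsubS, Uopen, onememU⟩
  set V : Set G := U ∩ U⁻¹ with hVdef
  have hVnhd : V ∈ nhds (1 : G) := by
    refine Filter.inter_mem (Uopen.mem_nhds onememU) ?_
    simpa using (Uopen.preimage continuous_inv).mem_nhds (by simpa using onememU)
  have hVinv : V⁻¹ = V := by simp [hVdef, Set.inter_comm]
  have hVopen : IsOpen V := Uopen.inter (Uopen.preimage continuous_inv)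
  have hVmul : W * V ⊆ W := fun a ha ↦
    mulclose (Set.mul_subset_mul_left (UsubS.trans' Set.inter_subset_left) ha)
  let S' : Subgroup G :=
    { carrier := ⋃ n, V ^ (n + 1)
      mul_mem' := fun ha hb ↦ by
        rcases Set.mem_iUnion.mp ha with ⟨k, hk⟩
        rcases Set.mem_iUnion.mp hb with ⟨l, hl⟩
        apply Set.mem_iUnion.mpr
        use k + 1 + l
        rw [add_assoc, pow_add]
        exact Set.mul_mem_mul hk hl
      one_mem' := by
        apply Set.mem_iUnion.mpr
        use 0
        simp [mem_of_mem_nhds hVnhd]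
      inv_mem' := fun ha ↦ by
        rcases Set.mem_iUnion.mp ha with ⟨k, hk⟩
        apply Set.mem_iUnion.mpr
        use k
        rw [← hVinv]
        simpa only [inv_pow, Set.mem_inv, inv_inv] using hk }
  have hS'open : IsOpen (⋃ n, V ^ (n + 1)) := by
    refine isOpen_iUnion (fun n ↦ ?_)
    rw [pow_succ]
    exact hVopen.mul_left
  refine ⟨S', hS'open, ?_⟩
  have mulVpow (n : ℕ) : W * V ^ (n + 1) ⊆ W := by
    induction' n with n ih
    · simpa using hVmul
    · rw [pow_succ, ← mul_assoc]
      exact (Set.mul_subset_mul_right ih).trans hVmul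
  have hsub (n : ℕ) : V ^ (n + 1) ⊆ W * V ^ (n + 1) := by
    intro x xin
    rw [Set.mem_mul]
    exact ⟨1, einW, x, xin, one_mul x⟩
  exact Set.iUnion_subset fun i _ a ↦ mulVpow i (hsub i a)

/-- **Van Dantzig's theorem**: a t.d.l.c. group has a compact open subgroup. -/
lemma exists_compact_open_subgroup [LocallyCompactSpace G] [TotallyDisconnectedSpace G]
    [T2Space G] : ∃ U : Subgroup G, IsCompact (U : Set G) ∧ IsOpen (U : Set G) := by
  obtain ⟨s, scomp, hs1, -⟩ := exists_compact_subset isOpen_univ (Set.mem_univ (1 : G))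
  obtain ⟨W, hWclopen, hW1, hWsub⟩ :=
    (loc_compact_Haus_tot_disc_of_zero_dim).mem_nhds_iff.mp
      (isOpen_interior.mem_nhds hs1)
  have Wcomp : IsCompact W :=
    scomp.of_isClosed_subset hWclopen.1 (hWsub.trans interior_subset)
  obtain ⟨H, hHopen, hHsub⟩ :=
    exist_openSubgroup_sub_compact_open_nhd_of_one Wcomp hWclopen.2 hW1
  exact ⟨H, Wcomp.of_isClosed_subset (H.isClosed_of_isOpen hHopen) hHsub, hHopen⟩

/-- An open subgroup has finite (nonzero) relative index in any compact subgroup. -/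
lemma relIndex_ne_zero_of_compact_of_isOpen {H K : Subgroup G}
    (hK : IsCompact (K : Set G)) (hH : IsOpen (H : Set G)) : H.relIndex K ≠ 0 := by
  have : CompactSpace ↥K := isCompact_iff_compactSpace.mp hK
  have hopen : IsOpen ((H.subgroupOf K : Subgroup K) : Set K) := by
    have : ((H.subgroupOf K : Subgroup K) : Set K) = ((↑) : K → G) ⁻¹' H := rfl
    rw [this]
    exact hH.preimage continuous_subtype_val
  have := Subgroup.quotient_finite_of_isOpen _ hopen
  exact Subgroup.index_ne_zero_of_finite

end VanDantzig

/-- Let `G` be a t.d.l.c. group in which every infinite commensurated locally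
normal subgroup is open. Then every closed normal subgroup of `G` is discrete or open. -/
theorem closed_normal_discrete_or_open_of_SU
    (G : Type*) [Group G] [TopologicalSpace G] [IsTopologicalGroup G]
    [LocallyCompactSpace G] [TotallyDisconnectedSpace G] [T2Space G]
    (hSU : ∀ H : Subgroup G, IsCompact (H : Set G) → IsOpen (Subgroup.normalizer (H : Set G) : Set G) →
      (H : Set G).Infinite → CommensuratedBy H → IsOpen (H : Set G)) :
    ∀ N : Subgroup G, N.Normal → IsClosed (N : Set G) →
      DiscreteTopology ↥N ∨ IsOpen (N : Set G) := by
  intro N hN hNclosed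
  obtain ⟨U, Ucomp, Uopen⟩ := exists_compact_open_subgroup (G := G)
  set K : Subgroup G := N ⊓ U with hK
  have hKset : (K : Set G) = (N : Set G) ∩ (U : Set G) := rfl
  have hKcomp : IsCompact (K : Set G) := by
    refine Ucomp.of_isClosed_subset (hNclosed.inter (U.isClosed_of_isOpen Uopen)) ?_
    rw [hKset]; exact Set.inter_subset_right
  -- the normalizer of `K` contains `U`, hence is open
  have hUnorm : U ≤ Subgroup.normalizer (K : Set G) := by
    intro u hu
    rw [Subgroup.mem_normalizer_iff]
    intro n
    rw [hK, Subgroup.mem_inf, Subgroup.mem_inf]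
    constructor
    · rintro ⟨hn1, hn2⟩
      exact ⟨hN.conj_mem n hn1 u, mul_mem (mul_mem hu hn2) (inv_mem hu)⟩
    · rintro ⟨hn1, hn2⟩
      have h1 := hN.conj_mem _ hn1 u⁻¹
      have h2 : n = u⁻¹ * (u * n * u⁻¹) * u := by group
      refine ⟨?_, ?_⟩
      · have : u⁻¹ * (u * n * u⁻¹) * u⁻¹⁻¹ = n := by group
        rwa [this] at h1
      · rw [h2]; exact mul_mem (mul_mem (inv_mem hu) hn2) hu
  have hnormOpen : IsOpen (Subgroup.normalizer (K : Set G) : Set G) := Subgroup.isOpen_mono hUnorm Uopen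
  -- `K` is commensurated
  have hcomm : CommensuratedBy K := by
    intro g
    set φ := (MulAut.conj g).toMonoidHom with hφ
    have hφinj : Function.Injective φ := (MulAut.conj g).injective
    have hφfun : ⇑φ = fun x : G => g * x * g⁻¹ := rfl
    have hNmap : N.map φ = N := by
      ext x
      simp only [Subgroup.mem_map]
      constructor
      · rintro ⟨y, hy, rfl⟩
        exact hN.conj_mem y hy g
      · intro hx
        refine ⟨g⁻¹ * x * g, ?_, ?_⟩
        · have := hN.conj_mem x hx g⁻¹
          simpa [mul_assoc] using this
        · show g * (g⁻¹ * x * g) * g⁻¹ = x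
          group
    have hA : K.map φ = N ⊓ U.map φ := by
      rw [hK, Subgroup.map_inf _ _ φ hφinj, hNmap]
    have hUφopen : IsOpen ((U.map φ : Subgroup G) : Set G) := by
      have h : ⇑φ = ⇑((Homeomorph.mulLeft g).trans (Homeomorph.mulRight g⁻¹)) := rfl
      rw [Subgroup.coe_map, h]
      exact ((Homeomorph.mulLeft g).trans (Homeomorph.mulRight g⁻¹)).isOpenMap _ Uopen
    have hKφcomp : IsCompact ((K.map φ : Subgroup G) : Set G) := by
      rw [Subgroup.coe_map, hφfun]
      exact hKcomp.image (by fun_prop)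
    constructor
    · have hinf : K.map φ ⊓ K = U.map φ ⊓ K := by
        rw [hA, hK]
        ext x
        simp only [Subgroup.mem_inf]
        tauto
      rw [← Subgroup.inf_relIndex_right, hinf, Subgroup.inf_relIndex_right]
      exact relIndex_ne_zero_of_compact_of_isOpen hKcomp hUφopen
    · have hinf : K ⊓ K.map φ = U ⊓ K.map φ := by
        rw [hA, hK]
        ext x
        simp only [Subgroup.mem_inf]
        tauto
      rw [← Subgroup.inf_relIndex_right, hinf, Subgroup.inf_relIndex_right]
      exact relIndex_ne_zero_of_compact_of_isOpen hKφcomp Uopen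
  by_cases hinf : (K : Set G).Infinite
  · right
    have hKopen := hSU K hKcomp hnormOpen hinf hcomm
    exact Subgroup.isOpen_mono (inf_le_left : K ≤ N) hKopen
  · left
    rw [Set.not_infinite] at hinf
    rw [discreteTopology_iff_isOpen_singleton_one]
    set V : Set ↥N := ((↑) : ↥N → G) ⁻¹' (U : Set G) with hV
    have hVopen : IsOpen V := Uopen.preimage continuous_subtype_val
    have hVK : V = ((↑) : ↥N → G) ⁻¹' (K : Set G) := by
      ext x
      simp [hV, hKset, x.2]
    have hVfin : V.Finite := by
      rw [hVK]
      exact Set.Finite.preimage Subtype.val_injective.injOn hinf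
    have h1V : (1 : ↥N) ∈ V := by
      show ((1 : ↥N) : G) ∈ (U : Set G)
      simpa using U.one_mem
    have hsing : ({(1 : ↥N)} : Set ↥N) = V \ (V \ {1}) := by
      ext x
      by_cases hx : x = 1 <;> simp [hx, h1V]
    rw [hsing]
    exact hVopen.sdiff ((hVfin.subset Set.diff_subset).isClosed)
end

section
/- Let G be a compactly generated, topologically simple t.d.l.c. group, and let L be a subgroup of G whose normaliser in G is open. Then there is a finite subset Σ of G such that the subgroup ⟨Σ ∪ L⟩ generated by Σ and L equals the normal closure of L in G (the smallest normal subgroup of G containing L). -/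
open Set Pointwise

/-- van Dantzig: in a t.d.l.c. group, every open neighbourhood of `1` contains a
compact open subgroup. -/
theorem exists_compact_open_subgroup_aux
    {G : Type*} [Group G] [TopologicalSpace G] [IsTopologicalGroup G]
    [LocallyCompactSpace G] [TotallyDisconnectedSpace G] [T2Space G]
    {N : Set G} (hN : IsOpen N) (h1 : (1 : G) ∈ N) :
    ∃ U : Subgroup G, IsCompact (U : Set G) ∧ IsOpen (U : Set G) ∧ (U : Set G) ⊆ N := by
  obtain ⟨K, hKc, h1K, hKN⟩ := exists_compact_subset hN h1
  obtain ⟨C, hCclopen, h1C, hCK⟩ :=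
    (loc_compact_Haus_tot_disc_of_zero_dim).mem_nhds_iff.1 (isOpen_interior.mem_nhds h1K)
  have hCc : IsCompact C :=
    hKc.of_isClosed_subset hCclopen.isClosed (hCK.trans interior_subset)
  obtain ⟨V, hV1, hVC⟩ := compact_open_separated_mul_left hCc hCclopen.isOpen Subset.rfl
  obtain ⟨V₀, hV₀V, hV₀o, h1V₀⟩ := mem_nhds_iff.1 hV1
  set S : Set G := V₀ ∩ V₀⁻¹ with hSdef
  have hSo : IsOpen S := hV₀o.inter hV₀o.inv
  have h1S : (1 : G) ∈ S := ⟨h1V₀, by simpa using h1V₀⟩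
  have hSC : ∀ x ∈ S, ∀ c ∈ C, x * c ∈ C := fun x hx c hc =>
    hVC (Set.mul_mem_mul (hV₀V hx.1) hc)
  have hsub : ((Subgroup.closure S : Subgroup G) : Set G) ⊆ C := by
    intro g hg
    have hg' : g ∈ Submonoid.closure (S ∪ S⁻¹) := by
      rw [← Subgroup.closure_toSubmonoid] at *
      exact hg
    obtain ⟨l, hl, rfl⟩ := Submonoid.exists_list_of_mem_closure hg'
    have hlS : ∀ y ∈ l, y ∈ S := by
      intro y hy
      rcases hl y hy with h | h
      · exact h
      · have h' : y⁻¹ ∈ S := h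
        exact ⟨by simpa using h'.2, by simpa using h'.1⟩
    have key : ∀ (l : List G), (∀ y ∈ l, y ∈ S) → ∀ c ∈ C, l.prod * c ∈ C := by
      intro l
      induction l with
      | nil => intro _ c hc; simpa using hc
      | cons x xs ih =>
        intro h c hc
        rw [List.prod_cons, mul_assoc]
        exact hSC x (h x (List.mem_cons_self (a := x) (l := xs))) _
          (ih (fun y hy => h y (List.mem_cons_of_mem x hy)) c hc)
    simpa using key l hlS 1 h1C
  have hopen : IsOpen ((Subgroup.closure S : Subgroup G) : Set G) :=
    Subgroup.isOpen_of_mem_nhds _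
      (Filter.mem_of_superset (hSo.mem_nhds h1S) Subgroup.subset_closure)
  exact ⟨Subgroup.closure S,
    hCc.of_isClosed_subset ((Subgroup.closure S).isClosed_of_isOpen hopen) hsub,
    hopen, hsub.trans (hCK.trans (interior_subset.trans hKN))⟩

/-- Let `G` be a compactly generated topologically simple t.d.l.c. group, and
let `L` be a subgroup with open normaliser. Then there is a finite set `S ⊆ G` such that
`⟨S ∪ L⟩` is the normal closure of `L` in `G`. -/
theorem normalClosure_eq_closure_of_finset_union
    (G : Type*) [Group G] [TopologicalSpace G] [IsTopologicalGroup G]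
    [LocallyCompactSpace G] [TotallyDisconnectedSpace G] [T2Space G]
    (hcg : ∃ S : Set G, IsCompact S ∧ Subgroup.closure S = ⊤)
    (hts : ∀ N : Subgroup G, N.Normal → IsClosed (N : Set G) → N = ⊥ ∨ N = ⊤)
    (L : Subgroup G) (hL : IsOpen (Subgroup.normalizer (L : Set G) : Set G)) :
    ∃ S : Finset G,
      Subgroup.closure ((S : Set G) ∪ (L : Set G)) = Subgroup.normalClosure (L : Set G) := by
  classical
  by_cases hbot : L = ⊥
  · refine ⟨∅, ?_⟩
    subst hbot
    apply le_antisymm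
    · rw [Subgroup.closure_le]
      rintro x (hx | hx)
      · exact absurd hx (by simp)
      · exact Subgroup.subset_normalClosure hx
    · have hle : Subgroup.normalClosure ((⊥ : Subgroup G) : Set G) ≤ ⊥ :=
        Subgroup.normalClosure_le_normal (by simp)
      exact hle.trans bot_le
  -- setup: symmetric compact generating set X with 1 ∈ X
  obtain ⟨X0, hX0c, hX0gen⟩ := hcg
  set X : Set G := (X0 ∪ X0⁻¹) ∪ {1} with hXdef
  have hXc : IsCompact X := (hX0c.union hX0c.inv).union isCompact_singleton
  have h1X : (1 : G) ∈ X := Or.inr rfl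
  have hXsymm : ∀ x ∈ X, x⁻¹ ∈ X := by
    rintro x ((hx | hx) | hx)
    · exact Or.inl (Or.inr (by simpa using hx))
    · exact Or.inl (Or.inl (by simpa using hx))
    · rw [Set.mem_singleton_iff] at hx
      subst hx
      exact Or.inr (by simp)
  have hXgen : Subgroup.closure X = ⊤ :=
    top_unique (hX0gen ▸ Subgroup.closure_mono (fun x hx => Or.inl (Or.inl hx)))
  -- compact open subgroup of the normalizer
  obtain ⟨U, hUc, hUo, hUsub⟩ :=
    exists_compact_open_subgroup_aux hL (Subgroup.normalizer (L : Set G)).one_mem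
  have hUN : ∀ u ∈ U, ∀ x ∈ L, u * x * u⁻¹ ∈ L := fun u hu x hx =>
    (Subgroup.mem_normalizer_iff.1 (hUsub hu) x).1 hx
  -- the compact set B = U * X * U
  set B : Set G := (U : Set G) * X * (U : Set G) with hBdef
  have hBc : IsCompact B := (hUc.mul hXc).mul hUc
  have hmemB : ∀ {u x v : G}, u ∈ U → x ∈ X → v ∈ U → u * x * v ∈ B :=
    fun hu hx hv => Set.mul_mem_mul (Set.mul_mem_mul hu hx) hv
  have hXB : ∀ x ∈ X, x ∈ B := by
    intro x hx
    have := hmemB (U.one_mem) hx (U.one_mem)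
    simpa using this
  have hBdec : ∀ b ∈ B, ∃ u ∈ U, ∃ x ∈ X, ∃ v ∈ U, u * x * v = b := by
    intro b hb
    obtain ⟨y, hy, v, hv, rfl⟩ := Set.mem_mul.1 hb
    obtain ⟨u, hu, x, hx, rfl⟩ := Set.mem_mul.1 hy
    exact ⟨u, hu, x, hx, v, hv, rfl⟩
  have hBsymm : ∀ b ∈ B, b⁻¹ ∈ B := by
    intro b hb
    obtain ⟨u, hu, x, hx, v, hv, rfl⟩ := hBdec b hb
    have : v⁻¹ * x⁻¹ * u⁻¹ ∈ B := hmemB (U.inv_mem hv) (hXsymm x hx) (U.inv_mem hu)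
    simpa [mul_inv_rev, mul_assoc] using this
  have hUBU : ∀ u ∈ U, ∀ b ∈ B, ∀ v ∈ U, u * b * v ∈ B := by
    intro u hu b hb v hv
    obtain ⟨u₀, hu₀, x, hx, v₀, hv₀, rfl⟩ := hBdec b hb
    have : (u * u₀) * x * (v₀ * v) ∈ B := hmemB (U.mul_mem hu hu₀) hx (U.mul_mem hv₀ hv)
    simpa [mul_assoc] using this
  -- finite subcover by left cosets of U
  obtain ⟨t, htB, htfin, hcov⟩ := hBc.elim_finite_subcover_image
    (fun a (_ : a ∈ B) => hUo.smul a)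
    (fun b hb => Set.mem_iUnion₂.2 ⟨b, hb, Set.mem_smul_set.2 ⟨1, U.one_mem, mul_one b⟩⟩)
  have hUAU : ∀ a ∈ B, ∀ u ∈ U, ∀ v ∈ U,
      ∃ a' ∈ t, ∃ w ∈ U, u * a * v = a' * w := by
    intro a ha u hu v hv
    have hmem : u * a * v ∈ B := hUBU u hu a ha v hv
    obtain ⟨a', ha't, hmem'⟩ := Set.mem_iUnion₂.1 (hcov hmem)
    obtain ⟨w, hw, hw'⟩ := Set.mem_smul_set.1 hmem'
    exact ⟨a', ha't, w, hw, by rw [← hw', smul_eq_mul]⟩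
  -- the normal closure W is dense
  set W := Subgroup.normalClosure (L : Set G) with hWdef
  have hWdense : Dense (W : Set G) := by
    rcases hts W.topologicalClosure (Subgroup.is_normal_topologicalClosure W)
        W.isClosed_topologicalClosure with h | h
    · exfalso
      apply hbot
      have hLW : L ≤ W.topologicalClosure :=
        le_trans Subgroup.le_normalClosure W.le_topologicalClosure
      rw [h] at hLW
      exact le_bot_iff.1 hLW
    · rw [dense_iff_closure_eq]
      rw [← Subgroup.topologicalClosure_coe, h, Subgroup.coe_top]
  -- choose Σ ⊆ W with the same cosets as t
  have hchoice : ∀ a : G, ∃ x : G, a ∈ t → x ∈ W ∧ x ∈ a • (U : Set G) := by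
    intro a
    by_cases hat : a ∈ t
    · obtain ⟨x, hxU, hxW⟩ := hWdense.inter_open_nonempty (a • (U : Set G)) (hUo.smul a)
        ⟨a, Set.mem_smul_set.2 ⟨1, U.one_mem, mul_one a⟩⟩
      exact ⟨x, fun _ => ⟨hxW, hxU⟩⟩
    · exact ⟨1, fun h => absurd h hat⟩
  choose d hd using hchoice
  set Sig : Set G := d '' t with hSigdef
  set H := Subgroup.closure (Sig ∪ (L : Set G)) with hHdef
  have hSigH : ∀ a ∈ t, d a ∈ H := fun a ha => Subgroup.subset_closure (Or.inl ⟨a, ha, rfl⟩)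
  have hLH : ∀ x ∈ L, x ∈ H := fun x hx => Subgroup.subset_closure (Or.inr hx)
  have hdU : ∀ a ∈ t, ∃ w ∈ U, a * w = d a := by
    intro a ha
    obtain ⟨w, hw, hw'⟩ := Set.mem_smul_set.1 (hd a ha).2
    exact ⟨w, hw, by rw [← hw', smul_eq_mul]⟩
  -- key commutation lemma : U * H ⊆ H * U
  have key : ∀ h ∈ H, ∀ u ∈ U,
      (∃ h' ∈ H, ∃ w ∈ U, u * h = h' * w) ∧ (∃ h' ∈ H, ∃ w ∈ U, u * h⁻¹ = h' * w) := by
    intro h hh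
    induction hh using Subgroup.closure_induction with
    | mem x hx =>
      rcases hx with hx | hx
      · -- x = d a for some a ∈ t
        obtain ⟨a, hat, rfl⟩ := hx
        obtain ⟨w, hw, hdaw⟩ := hdU a hat
        intro u hu
        constructor
        · obtain ⟨a', ha't, w', hw', heq⟩ := hUAU a (htB hat) u hu w hw
          obtain ⟨v', hv', hv''⟩ := hdU a' ha't
          refine ⟨d a', hSigH a' ha't, v'⁻¹ * w', U.mul_mem (U.inv_mem hv') hw', ?_⟩
          have e1 : u * d a = a' * w' := by rw [← hdaw, ← heq]; group
          rw [e1, ← hv'']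
          group
        · obtain ⟨a', ha't, w', hw', heq⟩ :=
            hUAU a⁻¹ (hBsymm a (htB hat)) (u * w⁻¹) (U.mul_mem hu (U.inv_mem hw)) 1 U.one_mem
          obtain ⟨v', hv', hv''⟩ := hdU a' ha't
          refine ⟨d a', hSigH a' ha't, v'⁻¹ * w', U.mul_mem (U.inv_mem hv') hw', ?_⟩
          have e1 : u * (d a)⁻¹ = a' * w' := by
            rw [← hdaw, ← heq]; group
          rw [e1, ← hv'']
          group
      · -- x ∈ L
        intro u hu
        constructor
        · exact ⟨u * x * u⁻¹, hLH _ (hUN u hu x hx), u, hu, by group⟩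
        · exact ⟨u * x⁻¹ * u⁻¹, hLH _ (hUN u hu x⁻¹ (L.inv_mem hx)), u, hu, by group⟩
    | one =>
      intro u hu
      exact ⟨⟨1, H.one_mem, u, hu, by group⟩, ⟨1, H.one_mem, u, hu, by group⟩⟩
    | mul x y hx hy ihx ihy =>
      intro u hu
      constructor
      · obtain ⟨h₁, hh₁, w₁, hw₁, e₁⟩ := (ihx u hu).1
        obtain ⟨h₂, hh₂, w₂, hw₂, e₂⟩ := (ihy w₁ hw₁).1
        refine ⟨h₁ * h₂, H.mul_mem hh₁ hh₂, w₂, hw₂, ?_⟩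
        rw [show u * (x * y) = (u * x) * y by group, e₁,
          show h₁ * w₁ * y = h₁ * (w₁ * y) by group, e₂]
        group
      · obtain ⟨h₁, hh₁, w₁, hw₁, e₁⟩ := (ihy u hu).2
        obtain ⟨h₂, hh₂, w₂, hw₂, e₂⟩ := (ihx w₁ hw₁).2
        refine ⟨h₁ * h₂, H.mul_mem hh₁ hh₂, w₂, hw₂, ?_⟩
        rw [show u * (x * y)⁻¹ = (u * y⁻¹) * x⁻¹ by group, e₁,
          show h₁ * w₁ * x⁻¹ = h₁ * (w₁ * x⁻¹) by group, e₂]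
        group
    | inv x hx ihx =>
      intro u hu
      refine ⟨(ihx u hu).2, ?_⟩
      simpa only [inv_inv] using (ihx u hu).1
  -- the set H * U is a subgroup containing X, hence everything
  have hQtop : ∀ g : G, ∃ h ∈ H, ∃ u ∈ U, g = h * u := by
    let Q : Subgroup G :=
      { carrier := { g : G | ∃ h ∈ H, ∃ u ∈ U, g = h * u }
        one_mem' := ⟨1, H.one_mem, 1, U.one_mem, by group⟩
        mul_mem' := by
          rintro g₁ g₂ ⟨h₁, hh₁, u₁, hu₁, rfl⟩ ⟨h₂, hh₂, u₂, hu₂, rfl⟩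
          obtain ⟨h', hh', w, hw, e⟩ := (key h₂ hh₂ u₁ hu₁).1
          refine ⟨h₁ * h', H.mul_mem hh₁ hh', w * u₂, U.mul_mem hw hu₂, ?_⟩
          rw [show h₁ * u₁ * (h₂ * u₂) = h₁ * (u₁ * h₂) * u₂ by group, e]
          group
        inv_mem' := by
          rintro g ⟨h, hh, u, hu, rfl⟩
          obtain ⟨h', hh', w, hw, e⟩ := (key h hh u⁻¹ (U.inv_mem hu)).2
          exact ⟨h', hh', w, hw, by rw [mul_inv_rev, e]⟩ }
    intro g
    have hXQ : X ⊆ (Q : Set G) := by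
      intro x hx
      obtain ⟨a, hat, hmem⟩ := Set.mem_iUnion₂.1 (hcov (hXB x hx))
      obtain ⟨w, hw, hw'⟩ := Set.mem_smul_set.1 hmem
      obtain ⟨v, hv, hv'⟩ := hdU a hat
      refine ⟨d a, hSigH a hat, v⁻¹ * w, U.mul_mem (U.inv_mem hv) hw, ?_⟩
      rw [← hw', smul_eq_mul, ← hv']
      group
    have : Subgroup.closure X ≤ Q := (Subgroup.closure_le Q).2 hXQ
    have hg : g ∈ Q := this (by rw [hXgen]; exact Subgroup.mem_top g)
    exact hg
  -- conclusion
  refine ⟨(htfin.image d).toFinset, ?_⟩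
  rw [Set.Finite.coe_toFinset]
  apply le_antisymm
  · rw [Subgroup.closure_le]
    rintro x (hx | hx)
    · obtain ⟨a, hat, rfl⟩ := hx
      exact (hd a hat).1
    · exact Subgroup.subset_normalClosure hx
  · have hNC : Subgroup.normalClosure (L : Set G)
        = Subgroup.closure (Group.conjugatesOfSet (L : Set G)) := rfl
    rw [hWdef, hNC, Subgroup.closure_le]
    intro y hy
    obtain ⟨x, hxL, hconj⟩ := Group.mem_conjugatesOfSet_iff.1 hy
    obtain ⟨c, hc⟩ := isConj_iff.1 hconj
    obtain ⟨h, hh, u, hu, rfl⟩ := hQtop c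
    have hx' : u * x * u⁻¹ ∈ L := hUN u hu x hxL
    have hy' : y = h * (u * x * u⁻¹) * h⁻¹ := by rw [← hc]; group
    rw [hy']
    exact H.mul_mem (H.mul_mem hh (hLH _ hx')) (H.inv_mem hh)
end

section
/- Let G be a topologically simple t.d.l.c. group, and let A and B be non-trivial subnormal subgroups of G (not necessarily closed). Then A ∩ B is dense in G. Moreover, if B is the normal closure in G of a locally normal subgroup L of G, then B = ⟨(A ∩ B) ∪ L⟩; in particular, B is the smallest subnormal subgroup of G containing L. -/
/-- A subgroup is subnormal if it is joined to the whole group by a finite chain of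
successively normal subgroups. -/
def IsSubnormal {G : Type*} [Group G] (A : Subgroup G) : Prop :=
  ∃ n : ℕ, ∃ c : Fin (n + 1) → Subgroup G, c 0 = A ∧ c (Fin.last n) = ⊤ ∧
    ∀ i : Fin n, c i.castSucc ≤ c i.succ ∧
      ∀ x ∈ c i.succ, ∀ a ∈ c i.castSucc, x * a * x⁻¹ ∈ c i.castSucc


section Aux

variable {G : Type*} [Group G]

/-- Inductive characterisation of subnormality. -/
inductive SN : Subgroup G → Prop
  | top : SN ⊤
  | step {A H : Subgroup G} (hH : SN H) (hle : A ≤ H)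
      (hconj : ∀ x ∈ H, ∀ a ∈ A, x * a * x⁻¹ ∈ A) : SN A

theorem IsSubnormal.sn {A : Subgroup G} (h : IsSubnormal A) : SN A := by
  obtain ⟨n, c, h0, hlast, hstep⟩ := h
  have key : ∀ k, k ≤ n → SN (c ⟨n - k, by omega⟩) := by
    intro k
    induction k with
    | zero =>
      intro _
      have e : (⟨n - 0, by omega⟩ : Fin (n + 1)) = Fin.last n := by
        ext; simp [Fin.last]
      rw [e, hlast]; exact SN.top
    | succ k ih =>
      intro hk
      have hlt : n - (k + 1) < n := by omega
      have h1 := hstep ⟨n - (k + 1), hlt⟩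
      have e1 : (⟨n - (k + 1), hlt⟩ : Fin n).castSucc = ⟨n - (k + 1), by omega⟩ := rfl
      have e2 : (⟨n - (k + 1), hlt⟩ : Fin n).succ = ⟨n - k, by omega⟩ := by
        ext; simp [Fin.succ]; omega
      rw [e1, e2] at h1
      exact SN.step (ih (by omega)) h1.1 h1.2
  have hkey := key n le_rfl
  have e : (⟨n - n, by omega⟩ : Fin (n + 1)) = 0 := by ext; simp
  rwa [e, h0] at hkey

theorem SN.inf {A B : Subgroup G} (hA : SN A) (hB : SN B) : SN (A ⊓ B) := by
  induction hA with
  | top => rwa [top_inf_eq]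
  | @step A H hH hle hconj ih =>
    refine SN.step ih (inf_le_inf_right B hle) ?_
    intro x hx a ha
    obtain ⟨hxH, hxB⟩ := Subgroup.mem_inf.mp hx
    obtain ⟨haA, haB⟩ := Subgroup.mem_inf.mp ha
    exact Subgroup.mem_inf.mpr
      ⟨hconj x hxH a haA, mul_mem (mul_mem hxB haB) (inv_mem hxB)⟩

theorem neBot_of_le_neBot {A H : Subgroup G} (hle : A ≤ H) (hA : A ≠ ⊥) : H ≠ ⊥ :=
  fun h => hA (le_bot_iff.mp (h ▸ hle))

end Aux

section Topo

variable {G : Type*} [Group G] [TopologicalSpace G] [IsTopologicalGroup G]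

theorem isClosed_normalizer' {H : Subgroup G} (hH : IsClosed (H : Set G)) :
    IsClosed ((Subgroup.normalizer (H : Set G)) : Set G) := by
  have e : ((Subgroup.normalizer (H : Set G)) : Set G) =
      (⋂ n ∈ H, {g : G | g * n * g⁻¹ ∈ H}) ∩ ⋂ n ∈ H, {g : G | g⁻¹ * n * g ∈ H} := by
    ext g
    simp only [Set.mem_inter_iff, Set.mem_iInter, Set.mem_setOf_eq, SetLike.mem_coe]
    constructor
    · intro hg
      refine ⟨fun n hn => (Subgroup.mem_normalizer_iff.mp hg n).mp hn, fun n hn => ?_⟩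
      have h1 : g * (g⁻¹ * n * g) * g⁻¹ = n := by group
      exact (Subgroup.mem_normalizer_iff.mp hg (g⁻¹ * n * g)).mpr (by rw [h1]; exact hn)
    · rintro ⟨h1, h2⟩
      rw [Subgroup.mem_normalizer_iff]
      intro n
      refine ⟨h1 n, fun hn => ?_⟩
      have h3 := h2 _ hn
      have h4 : g⁻¹ * (g * n * g⁻¹) * g = n := by group
      rwa [h4] at h3
  rw [e]
  refine IsClosed.inter ?_ ?_ <;>
    exact isClosed_biInter fun n _ => hH.preimage (by fun_prop)

theorem SN.dense_of_ne_bot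
    (hts : ∀ N : Subgroup G, N.Normal → IsClosed (N : Set G) → N = ⊥ ∨ N = ⊤)
    {A : Subgroup G} (hsn : SN A) (hA : A ≠ ⊥) : Dense (A : Set G) := by
  induction hsn with
  | top => rw [Subgroup.coe_top]; exact dense_univ
  | @step A H hH hle hconj ih =>
    have hHd : Dense (H : Set G) := ih (neBot_of_le_neBot hle hA)
    set K := A.topologicalClosure with hK
    have hKcl : IsClosed (K : Set G) := A.isClosed_topologicalClosure
    have conj_mem : ∀ x : G, (∀ a ∈ A, x * a * x⁻¹ ∈ A) →
        ∀ n ∈ _root_.closure (A : Set G), x * n * x⁻¹ ∈ _root_.closure (A : Set G) := by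
      intro x hx n hn
      have hc : Continuous fun g : G => x * g * x⁻¹ := by fun_prop
      have h1 := image_closure_subset_closure_image (s := (A : Set G)) hc
      have h2 : (fun g => x * g * x⁻¹) '' (A : Set G) ⊆ (A : Set G) := by
        rintro _ ⟨a, ha, rfl⟩; exact hx a ha
      exact closure_mono h2 (h1 ⟨n, hn, rfl⟩)
    have hsub : (H : Set G) ⊆ ((Subgroup.normalizer (K : Set G)) : Set G) := by
      intro x hx
      rw [SetLike.mem_coe, Subgroup.mem_normalizer_iff]
      intro n
      have hmemK : ∀ m : G, m ∈ K ↔ m ∈ _root_.closure (A : Set G) := by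
        intro m; rw [← Subgroup.topologicalClosure_coe, SetLike.mem_coe]
      constructor
      · intro hn
        rw [hmemK] at hn ⊢
        exact conj_mem x (hconj x hx) n hn
      · intro hn
        rw [hmemK] at hn ⊢
        have := conj_mem x⁻¹ (hconj x⁻¹ (inv_mem hx)) _ hn
        simpa [mul_assoc] using this
    have hmem : ∀ x : G, x ∈ (Subgroup.normalizer (K : Set G)) := by
      intro x
      have hx : x ∈ _root_.closure ((Subgroup.normalizer (K : Set G)) : Set G) := hHd.mono hsub x
      rwa [(isClosed_normalizer' hKcl).closure_eq] at hx
    have hnorm : K.Normal := Subgroup.normalizer_eq_top_iff.mp (((Subgroup.eq_top_iff' _).mpr hmem))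
    rcases hts K hnorm hKcl with h | h
    · exact absurd (le_bot_iff.mp (h ▸ A.le_topologicalClosure)) hA
    · rw [dense_iff_closure_eq, ← Subgroup.topologicalClosure_coe, ← hK, h, Subgroup.coe_top]

end Topo

section Main

open Topology Filter

variable {G : Type*} [Group G] [TopologicalSpace G] [IsTopologicalGroup G]

theorem isClosed_center' [T2Space G] : IsClosed ((Subgroup.center G) : Set G) := by
  have e : ((Subgroup.center G) : Set G) = ⋂ g : G, {z : G | g * z = z * g} := by
    ext z
    simp only [Set.mem_iInter, Set.mem_setOf_eq, SetLike.mem_coe, Subgroup.mem_center_iff]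
  rw [e]
  exact isClosed_iInter fun g => isClosed_eq (by fun_prop) (by fun_prop)

/-- In the abelian case, a topologically simple t.d.l.c. group is "discrete simple":
every nontrivial subgroup is everything. -/
theorem eq_top_of_comm [LocallyCompactSpace G] [TotallyDisconnectedSpace G] [T2Space G]
    (hts : ∀ N : Subgroup G, N.Normal → IsClosed (N : Set G) → N = ⊥ ∨ N = ⊤)
    (hcomm : ∀ x y : G, x * y = y * x)
    {g : G} (hg : g ≠ 1) {C : Subgroup G} (hC : C ≠ ⊥) : C = ⊤ := by
  have normal_of_comm : ∀ D : Subgroup G, D.Normal := by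
    intro D
    refine ⟨fun n hn x => ?_⟩
    have e : x * n * x⁻¹ = n := by rw [hcomm x n, mul_inv_cancel_right]
    rwa [e]
  -- step 1 : find a proper open subgroup
  have h1 : (1 : G) ∈ ({g}ᶜ : Set G) := by simp [Ne.symm hg]
  obtain ⟨s, hs_comp, h1s, hsU⟩ := exists_compact_subset isOpen_compl_singleton h1
  obtain ⟨V, hVb, h1V, hVsub⟩ :=
    loc_compact_Haus_tot_disc_of_zero_dim.mem_nhds_iff.mp (isOpen_interior.mem_nhds h1s)
  have hVclopen : IsClopen V := hVb
  have hVcomp : IsCompact V :=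
    hs_comp.of_isClosed_subset hVclopen.1 (hVsub.trans interior_subset)
  obtain ⟨W, hW, hVW⟩ := compact_open_separated_mul_right hVcomp hVclopen.2 subset_rfl
  set S : Set G := W ∩ W⁻¹ with hS
  have hSW : S ⊆ W := Set.inter_subset_left
  have hSinv : S⁻¹ = S := by rw [hS, Set.inter_inv, inv_inv, Set.inter_comm]
  have hSmem : S ∈ 𝓝 (1 : G) := by
    refine Filter.inter_mem hW ?_
    have : ContinuousAt (fun x : G => x⁻¹) 1 := continuous_inv.continuousAt
    have h2 := this.preimage_mem_nhds (by rwa [inv_one])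
    convert h2 using 1
    exact Set.inv_preimage.symm
  set H : Subgroup G := Subgroup.closure S with hHdef
  have hprod : ∀ h ∈ H, ∀ v ∈ V, v * h ∈ V := by
    intro h hh
    have hh' : h ∈ Submonoid.closure (S ∪ S⁻¹) := by
      rw [← Subgroup.closure_toSubmonoid]
      exact hh
    rw [hSinv, Set.union_self] at hh'
    refine Submonoid.closure_induction (motive := fun x _ => ∀ v ∈ V, v * x ∈ V)
      ?_ ?_ ?_ hh'
    · intro x hx v hv
      exact hVW (Set.mul_mem_mul hv (hSW hx))
    · intro v hv; rwa [mul_one]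
    · intro x y hx hy ihx ihy v hv
      rw [← mul_assoc]
      exact ihy _ (ihx v hv)
  have hHV : (H : Set G) ⊆ V := fun h hh => by
    have := hprod h hh 1 h1V
    rwa [one_mul] at this
  have hHopen : IsOpen (H : Set G) :=
    Subgroup.isOpen_of_mem_nhds H (Filter.mem_of_superset hSmem Subgroup.subset_closure)
  have hHclosed : IsClosed (H : Set G) := Subgroup.isClosed_of_isOpen H hHopen
  have hHbot : H = ⊥ := by
    rcases hts H (normal_of_comm H) hHclosed with h | h
    · exact h
    · exfalso
      have hgV : g ∈ V := hHV (h ▸ Subgroup.mem_top g)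
      exact (hsU (interior_subset (hVsub hgV))) rfl
  have hbotopen : IsOpen ((⊥ : Subgroup G) : Set G) := hHbot ▸ hHopen
  -- step 2 : every subgroup is open hence closed hence trivial or everything
  have hmem1 : ((⊥ : Subgroup G) : Set G) ∈ 𝓝 (1 : G) := hbotopen.mem_nhds (by simp)
  have hmem2 : (C : Set G) ∈ 𝓝 (1 : G) := by
    refine Filter.mem_of_superset hmem1 ?_
    intro x hx
    have hx1 : x = 1 := by simpa using hx
    rw [hx1]; exact C.one_mem
  have hCopen : IsOpen (C : Set G) := Subgroup.isOpen_of_mem_nhds C hmem2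
  rcases hts C (normal_of_comm C) (Subgroup.isClosed_of_isOpen C hCopen) with h | h
  · exact absurd h hC
  · exact h

theorem sn_inf_ne_bot [LocallyCompactSpace G] [TotallyDisconnectedSpace G] [T2Space G]
    (hts : ∀ N : Subgroup G, N.Normal → IsClosed (N : Set G) → N = ⊥ ∨ N = ⊤) :
    ∀ A : Subgroup G, SN A → A ≠ ⊥ → ∀ B : Subgroup G, SN B → B ≠ ⊥ → A ⊓ B ≠ ⊥ := by
  by_cases hcomm : ∀ x y : G, x * y = y * x
  · intro A _ hAne B _ hBne
    obtain ⟨a, ha⟩ := Subgroup.ne_bot_iff_exists_ne_one.mp hAne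
    have hg : (a : G) ≠ 1 := fun h => ha (by exact_mod_cast h)
    rw [eq_top_of_comm hts hcomm hg hAne, eq_top_of_comm hts hcomm hg hBne, top_inf_eq]
    intro htop
    exact hg (Subgroup.mem_bot.mp (htop ▸ Subgroup.mem_top (a : G)))
  · have hZ : Subgroup.center G = ⊥ := by
      have hnormal : (Subgroup.center G).Normal := by
        refine ⟨fun n hn x => ?_⟩
        have e : x * n * x⁻¹ = n := by
          rw [Subgroup.mem_center_iff.mp hn x, mul_inv_cancel_right]
        rwa [e]
      rcases hts (Subgroup.center G) hnormal isClosed_center' with h | h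
      · exact h
      · exact absurd
          (fun x y => Subgroup.mem_center_iff.mp (h.ge (Subgroup.mem_top y)) x) hcomm
    intro A hAs
    induction hAs with
    | top =>
      intro _ B _ hBne
      rwa [top_inf_eq]
    | @step A H hH hle hconj ihH =>
      intro hAne B hBs
      have hAsn : SN A := SN.step hH hle hconj
      induction hBs with
      | top =>
        intro _
        rw [inf_top_eq]; exact hAne
      | @step B K hK hleB hconjB ihK =>
        intro hBne
        have hBsn : SN B := SN.step hK hleB hconjB
        have hDne : A ⊓ K ≠ ⊥ := ihK (neBot_of_le_neBot hleB hBne)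
        have hEne : H ⊓ B ≠ ⊥ := ihH (neBot_of_le_neBot hle hAne) B hBsn hBne
        have hDdense : Dense ((A ⊓ K : Subgroup G) : Set G) :=
          (hAsn.inf hK).dense_of_ne_bot hts hDne
        have hex : ∃ d ∈ A ⊓ K, ∃ e ∈ H ⊓ B, d * e ≠ e * d := by
          by_contra hcon
          push_neg at hcon
          have hle_center : H ⊓ B ≤ Subgroup.center G := by
            intro e he
            rw [Subgroup.mem_center_iff]
            intro x
            have hclosed : IsClosed {y : G | y * e = e * y} :=
              isClosed_eq (by fun_prop) (by fun_prop)
            have hsubset : ((A ⊓ K : Subgroup G) : Set G) ⊆ {y : G | y * e = e * y} :=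
              fun d hd => hcon d hd e he
            have huniv : _root_.closure ((A ⊓ K : Subgroup G) : Set G) ⊆
                {y : G | y * e = e * y} := closure_minimal hsubset hclosed
            exact huniv (hDdense x)
          rw [hZ, le_bot_iff] at hle_center
          exact hEne hle_center
        obtain ⟨d, hd, e, he, hne⟩ := hex
        obtain ⟨hdA, hdK⟩ := Subgroup.mem_inf.mp hd
        obtain ⟨heH, heB⟩ := Subgroup.mem_inf.mp he
        have hzA : d * e * d⁻¹ * e⁻¹ ∈ A := by
          have h1 : e * d⁻¹ * e⁻¹ ∈ A := hconj e heH d⁻¹ (inv_mem hdA)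
          have e1 : d * e * d⁻¹ * e⁻¹ = d * (e * d⁻¹ * e⁻¹) := by group
          rw [e1]; exact mul_mem hdA h1
        have hzB : d * e * d⁻¹ * e⁻¹ ∈ B := mul_mem (hconjB d hdK e heB) (inv_mem heB)
        have hz1 : d * e * d⁻¹ * e⁻¹ ≠ 1 := by
          intro h
          apply hne
          calc d * e = (d * e * d⁻¹ * e⁻¹) * (e * d) := by group
          _ = e * d := by rw [h, one_mul]
        intro hbot
        exact hz1 (Subgroup.mem_bot.mp
          (hbot ▸ (Subgroup.mem_inf.mpr ⟨hzA, hzB⟩ : d * e * d⁻¹ * e⁻¹ ∈ A ⊓ B)))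

end Main

section Final

open Topology Pointwise

variable {G : Type*} [Group G] [TopologicalSpace G] [IsTopologicalGroup G]
  [LocallyCompactSpace G] [TotallyDisconnectedSpace G] [T2Space G]

theorem closure_eq_of_normalClosure
    (hts : ∀ N : Subgroup G, N.Normal → IsClosed (N : Set G) → N = ⊥ ∨ N = ⊤)
    {A B L : Subgroup G} (hA : A ≠ ⊥) (hB : B ≠ ⊥) (hAs : SN A) (hBs : SN B)
    (hNopen : IsOpen ((Subgroup.normalizer (L : Set G)) : Set G))
    (hBL : B = Subgroup.normalClosure (L : Set G)) :
    B = Subgroup.closure (((A ⊓ B : Subgroup G) : Set G) ∪ (L : Set G)) := by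
  have hdense : Dense ((A ⊓ B : Subgroup G) : Set G) :=
    (hAs.inf hBs).dense_of_ne_bot hts (sn_inf_ne_bot hts A hAs hA B hBs hB)
  refine le_antisymm ?_ ?_
  · conv_lhs => rw [hBL]
    refine (Subgroup.closure_le _).mpr ?_
    intro y hy
    obtain ⟨x, hxL, hconjxy⟩ := Group.mem_conjugatesOfSet_iff.mp hy
    obtain ⟨g, hg⟩ := isConj_iff.mp hconjxy
    have hopen : IsOpen (g • ((Subgroup.normalizer (L : Set G)) : Set G)) := hNopen.smul g
    have hne : (g • ((Subgroup.normalizer (L : Set G)) : Set G)).Nonempty := by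
      refine ⟨g • (1 : G), Set.smul_mem_smul_set (Subgroup.normalizer (L : Set G)).one_mem⟩
    obtain ⟨d, hdAB, hdcoset⟩ := hdense.exists_mem_open hopen hne
    have huN : g⁻¹ * d ∈ (Subgroup.normalizer (L : Set G)) := by
      have := Set.mem_smul_set_iff_inv_smul_mem.mp hdcoset
      simpa [smul_eq_mul] using this
    have hx' : (g⁻¹ * d)⁻¹ * x * (g⁻¹ * d) ∈ L := by
      have h2 := Subgroup.mem_normalizer_iff.mp (inv_mem huN) x
      simpa using h2.mp hxL
    have hyd : y = d * ((g⁻¹ * d)⁻¹ * x * (g⁻¹ * d)) * d⁻¹ := by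
      rw [← hg]; group
    rw [hyd]
    have hdmem : d ∈ Subgroup.closure (((A ⊓ B : Subgroup G) : Set G) ∪ (L : Set G)) :=
      Subgroup.subset_closure (Set.mem_union_left _ hdAB)
    have hxmem : (g⁻¹ * d)⁻¹ * x * (g⁻¹ * d) ∈
        Subgroup.closure (((A ⊓ B : Subgroup G) : Set G) ∪ (L : Set G)) :=
      Subgroup.subset_closure (Set.mem_union_right _ hx')
    exact mul_mem (mul_mem hdmem hxmem) (inv_mem hdmem)
  · refine (Subgroup.closure_le _).mpr (Set.union_subset ?_ ?_)
    · exact fun x hx => (Subgroup.mem_inf.mp hx).2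
    · exact hBL ▸ Subgroup.subset_normalClosure

theorem subnormal_intersection_dense'
    (hts : ∀ N : Subgroup G, N.Normal → IsClosed (N : Set G) → N = ⊥ ∨ N = ⊤)
    (A B : Subgroup G) (hA : A ≠ ⊥) (hB : B ≠ ⊥)
    (hAs : IsSubnormal A) (hBs : IsSubnormal B) :
    Dense ((A ⊓ B : Subgroup G) : Set G) ∧
    ∀ L : Subgroup G, IsCompact (L : Set G) → IsOpen ((Subgroup.normalizer (L : Set G)) : Set G) →
      B = Subgroup.normalClosure (L : Set G) →
      (B = Subgroup.closure (((A ⊓ B : Subgroup G) : Set G) ∪ (L : Set G)) ∧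
       ∀ C : Subgroup G, IsSubnormal C → L ≤ C → B ≤ C) := by
  have hAsn := hAs.sn
  have hBsn := hBs.sn
  constructor
  · exact (hAsn.inf hBsn).dense_of_ne_bot hts (sn_inf_ne_bot hts A hAsn hA B hBsn hB)
  · intro L _hLcomp hNopen hBL
    refine ⟨closure_eq_of_normalClosure hts hA hB hAsn hBsn hNopen hBL, ?_⟩
    intro C hCs hLC
    by_cases hCbot : C = ⊥
    · exfalso
      apply hB
      have hLbot : L = ⊥ := le_bot_iff.mp (hCbot ▸ hLC)
      rw [hBL, hLbot]
      exact le_bot_iff.mp (Subgroup.normalClosure_le_normal subset_rfl)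
    · have h2 := closure_eq_of_normalClosure hts (A := C) hCbot hB hCs.sn hBsn hNopen hBL
      rw [h2]
      refine (Subgroup.closure_le _).mpr (Set.union_subset ?_ ?_)
      · exact fun x hx => (Subgroup.mem_inf.mp hx).1
      · exact fun x hx => hLC hx

end Final

/-- Let `G` be a topologically simple t.d.l.c. group and let `A`, `B` be
non-trivial subnormal subgroups. Then `A ∩ B` is dense; and if `B` is the normal closure of a
locally normal subgroup `L`, then `B = ⟨(A ∩ B) ∪ L⟩`, and `B` is the smallest subnormal
subgroup containing `L`. -/
theorem subnormal_intersection_dense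
    (G : Type*) [Group G] [TopologicalSpace G] [IsTopologicalGroup G]
    [LocallyCompactSpace G] [TotallyDisconnectedSpace G] [T2Space G]
    (hts : ∀ N : Subgroup G, N.Normal → IsClosed (N : Set G) → N = ⊥ ∨ N = ⊤)
    (A B : Subgroup G) (hA : A ≠ ⊥) (hB : B ≠ ⊥)
    (hAs : IsSubnormal A) (hBs : IsSubnormal B) :
    Dense ((A ⊓ B : Subgroup G) : Set G) ∧
    ∀ L : Subgroup G, IsCompact (L : Set G) → IsOpen (Subgroup.normalizer (L : Set G) : Set G) →
      B = Subgroup.normalClosure (L : Set G) →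
      (B = Subgroup.closure (((A ⊓ B : Subgroup G) : Set G) ∪ (L : Set G)) ∧
       ∀ C : Subgroup G, IsSubnormal C → L ≤ C → B ≤ C) := by
  exact subnormal_intersection_dense' hts A B hA hB hAs hBs
end

section
/- Let G be a profinite group and let N be a countable dense normal subgroup of G. Then N is contained in the quasi-centre of G, i.e. every element of N has open centraliser in G; in particular, the conjugacy class in G of every element of N is finite. -/
/-- Let `G` be a profinite group and `N` a countable dense normal subgroup.
Then `N` is contained in the quasi-centre of `G`: every element of `N` has open centraliser,
and in particular its conjugacy class in `G` is finite. -/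
theorem countable_dense_normal_subset_quasiCentre
    (G : Type*) [Group G] [TopologicalSpace G] [IsTopologicalGroup G]
    [CompactSpace G] [TotallyDisconnectedSpace G] [T2Space G]
    (N : Subgroup G) (hN : N.Normal) (hcount : (N : Set G).Countable)
    (hdense : Dense (N : Set G)) :
    (∀ x ∈ N, IsOpen (Subgroup.centralizer {x} : Set G)) ∧
    (∀ x ∈ N, {y : G | ∃ g : G, y = g * x * g⁻¹}.Finite) := by
  have key : ∀ x ∈ N, IsOpen (Subgroup.centralizer ({x} : Set G) : Set G) := by
    intro x hx
    set C := Subgroup.centralizer ({x} : Set G) with hC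
    -- the conjugacy class is countable since it lies in N
    have hS : {y : G | ∃ g : G, y = g * x * g⁻¹}.Countable := by
      apply hcount.mono
      rintro y ⟨g, rfl⟩
      exact hN.conj_mem x hx g
    set S := {y : G | ∃ g : G, y = g * x * g⁻¹} with hSdef
    haveI : Countable S := hS.to_subtype
    -- fibers of the conjugation map are closed and cover G
    have hclosed : ∀ y : S, IsClosed {g : G | g * x * g⁻¹ = (y : G)} :=
      fun y => isClosed_eq (by continuity) continuous_const
    have hcover : (⋃ y : S, {g : G | g * x * g⁻¹ = (y : G)}) = Set.univ := by
      ext g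
      simp only [Set.mem_iUnion, Set.mem_univ, iff_true]
      exact ⟨⟨g * x * g⁻¹, ⟨g, rfl⟩⟩, rfl⟩
    -- Baire category: some fiber has nonempty interior
    obtain ⟨y, g₀, hg₀⟩ : ∃ y : S, (interior {g : G | g * x * g⁻¹ = (y : G)}).Nonempty := by
      apply nonempty_interior_of_iUnion_of_closed hclosed
      exact hcover
    have hg₀mem : g₀ ∈ {g : G | g * x * g⁻¹ = (y : G)} := interior_subset hg₀
    rw [Set.mem_setOf_eq] at hg₀mem
    -- translate: C is a neighborhood of 1
    have hnhds : (C : Set G) ∈ nhds (1 : G) := by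
      have hcont : Continuous (fun g : G => g₀ * g) := by continuity
      have h1 : (fun g : G => g₀ * g) ⁻¹' (interior {g : G | g * x * g⁻¹ = (y : G)}) ∈
          nhds (1 : G) := by
        apply (isOpen_interior.preimage hcont).mem_nhds
        simpa using hg₀
      apply Filter.mem_of_superset h1
      intro g hg
      have hg' : g₀ * g ∈ {g : G | g * x * g⁻¹ = (y : G)} := interior_subset hg
      rw [Set.mem_setOf_eq] at hg'
      rw [← hg₀mem] at hg'
      have : g * x * g⁻¹ = x := by
        have := hg'
        rw [mul_inv_rev] at this
        -- g₀ * (g * x * g⁻¹) * g₀⁻¹ = g₀ * x * g₀⁻¹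
        have h2 : g₀ * (g * x * g⁻¹) * g₀⁻¹ = g₀ * x * g₀⁻¹ := by
          rw [← this]; group
        exact mul_left_cancel (mul_right_cancel h2)
      rw [SetLike.mem_coe, Subgroup.mem_centralizer_iff]
      intro h hh
      rw [Set.mem_singleton_iff] at hh
      subst hh
      have := mul_inv_eq_iff_eq_mul.mp this
      rw [this]
    exact Subgroup.isOpen_of_mem_nhds C hnhds
  refine ⟨key, fun x hx => ?_⟩
  set C := Subgroup.centralizer ({x} : Set G) with hC
  have hopen := key x hx
  haveI : Finite (G ⧸ C) := C.quotient_finite_of_isOpen hopen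
  have hwd : ∀ a b : G, @Setoid.r _ (QuotientGroup.leftRel C) a b → a * x * a⁻¹ = b * x * b⁻¹ := by
    intro a b hab
    rw [QuotientGroup.leftRel_apply] at hab
    have hc : x * (a⁻¹ * b) = (a⁻¹ * b) * x := by
      have := (Subgroup.mem_centralizer_iff.mp hab) x (Set.mem_singleton x)
      exact this
    have : a * (x * (a⁻¹ * b)) * b⁻¹ = a * ((a⁻¹ * b) * x) * b⁻¹ := by rw [hc]
    calc a * x * a⁻¹ = a * (x * (a⁻¹ * b)) * b⁻¹ * (b * a⁻¹) * (a * b⁻¹) := by group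
      _ = a * ((a⁻¹ * b) * x) * b⁻¹ * (b * a⁻¹) * (a * b⁻¹) := by rw [this]
      _ = b * x * b⁻¹ * ((b * a⁻¹) * (a * b⁻¹)) := by group
      _ = b * x * b⁻¹ := by group
  set F : G ⧸ C → G := fun q => Quotient.liftOn' q (fun g => g * x * g⁻¹) hwd with hF
  apply Set.Finite.subset (Set.finite_range F)
  rintro y ⟨g, rfl⟩
  exact ⟨QuotientGroup.mk g, rfl⟩
end

section
/- Let U be a profinite group, and let V and W be closed normal subgroups of U such that W is an open subgroup of V and the quotient group V/W is not nilpotent. Then there is a closed normal subgroup N of U such that N is not contained in W (so in particular N is non-trivial), and such that every closed normal subgroup L of U with LW ⊇ V satisfies L ⊇ N. -/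
open Pointwise

/-- Intersection of a family of normal subgroups is normal. -/
private lemma normal_iInf' {G : Type*} [Group G] {ι : Sort*} (f : ι → Subgroup G)
    (h : ∀ i, (f i).Normal) : (⨅ i, f i).Normal := by
  constructor
  intro n hn g
  rw [Subgroup.mem_iInf] at hn ⊢
  exact fun i => (h i).conj_mem n (hn i) g

/-- Key commutator computation: if `K`, `L`, `W` are normal, then
`⁅K ⊔ W, L ⊔ W⁆ ≤ (K ⊓ L) ⊔ W`. -/
private lemma commutator_sup_sup_le {G : Type*} [Group G] (K L W : Subgroup G)
    (hK : K.Normal) (hL : L.Normal) (hW : W.Normal) :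
    ⁅K ⊔ W, L ⊔ W⁆ ≤ (K ⊓ L) ⊔ W := by
  haveI := hK; haveI := hL; haveI := hW
  haveI : ((K ⊓ L) ⊔ W).Normal := Subgroup.sup_normal _ _
  set T : Subgroup G := (K ⊓ L) ⊔ W with hT
  rw [Subgroup.commutator_le]
  intro a ha b hb
  rw [← SetLike.mem_coe, Subgroup.mul_normal] at ha hb
  obtain ⟨k, hk, w, hw, rfl⟩ := ha
  obtain ⟨l, hl, w', hw', rfl⟩ := hb
  have hker : ∀ x : G, (QuotientGroup.mk' T) x = 1 ↔ x ∈ T := by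
    intro x
    constructor
    · intro h
      have : x ∈ (QuotientGroup.mk' T).ker := h
      rwa [QuotientGroup.ker_mk'] at this
    · intro h
      have : x ∈ (QuotientGroup.mk' T).ker := by rwa [QuotientGroup.ker_mk']
      exact this
  refine (hker _).mp ?_
  rw [map_commutatorElement, map_mul, map_mul,
    (hker w).mpr (le_sup_right (a := K ⊓ L) hw),
    (hker w').mpr (le_sup_right (a := K ⊓ L) hw'), mul_one, mul_one,
    ← map_commutatorElement]
  refine (hker _).mpr (le_sup_left (b := W) ?_)
  exact Subgroup.commutator_le_inf (H₁ := K) (H₂ := L) (Subgroup.commutator_mem_commutator hk hl)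

/-- Lower central series maps onto the lower central series under a surjective hom. -/
private lemma lcs_le_map_of_surjective {G H : Type*} [Group G] [Group H] (f : G →* H)
    (hf : Function.Surjective f) (n : ℕ) :
    lowerCentralSeries (⊤ : Subgroup H) n ≤ Subgroup.map f (lowerCentralSeries (⊤ : Subgroup G) n) := by
  induction n with
  | zero =>
      have : Subgroup.map f ⊤ = ⊤ := by
        rw [← MonoidHom.range_eq_map, MonoidHom.range_eq_top_of_surjective f hf]
      exact this.ge
  | succ n ih =>
      have h1 : lowerCentralSeries (⊤ : Subgroup H) (n + 1) = ⁅lowerCentralSeries (⊤ : Subgroup H) n, (⊤ : Subgroup H)⁆ := rfl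
      have h2 : lowerCentralSeries (⊤ : Subgroup G) (n + 1) = ⁅lowerCentralSeries (⊤ : Subgroup G) n, (⊤ : Subgroup G)⁆ := rfl
      have htop : (⊤ : Subgroup H) ≤ Subgroup.map f ⊤ := by
        rw [← MonoidHom.range_eq_map, MonoidHom.range_eq_top_of_surjective f hf]
      rw [h1, h2, Subgroup.map_commutator]
      exact Subgroup.commutator_mono ih htop

/-- Let `U` be a profinite group, and `V`, `W` closed normal subgroups with
`W` open in `V` and `V/W` not nilpotent. Then there is a closed normal subgroup `N` of `U`,
not contained in `W`, such that every closed normal subgroup `L` of `U` with `LW ⊇ V`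
contains `N`. -/
theorem exists_closed_normal_not_le_of_non_nilpotent_quotient
    (U : Type*) [Group U] [TopologicalSpace U] [IsTopologicalGroup U]
    [CompactSpace U] [TotallyDisconnectedSpace U] [T2Space U]
    (V W : Subgroup U) (hV : V.Normal) (hW : W.Normal)
    (hVc : IsClosed (V : Set U)) (hWc : IsClosed (W : Set U))
    (hWV : W ≤ V) (hWopen : IsOpen {v : V | (v : U) ∈ W})
    (hnotnil : ¬ @Group.IsNilpotent (↥V ⧸ W.subgroupOf V)
      (@QuotientGroup.Quotient.group ↥V _ (W.subgroupOf V) (hW.subgroupOf V))) :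
    ∃ N : Subgroup U, N.Normal ∧ IsClosed (N : Set U) ∧ ¬ N ≤ W ∧
      ∀ L : Subgroup U, L.Normal → IsClosed (L : Set U) →
        (V : Set U) ⊆ (L : Set U) * (W : Set U) → N ≤ L := by
  haveI := hV; haveI := hW
  haveI hWVn : (W.subgroupOf V).Normal := hW.subgroupOf V
  -- the image in `U` of the lower central series of `V`
  set γ : ℕ → Subgroup U := fun k => Subgroup.map V.subtype (lowerCentralSeries (⊤ : Subgroup V) k) with hγ
  have hγV : ∀ k, γ k ≤ V := by
    intro k
    refine (Subgroup.map_le_range _ _).trans ?_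
    rw [Subgroup.range_subtype]
  have hγsucc : ∀ k, γ (k + 1) = ⁅γ k, V⁆ := by
    intro k
    have h1 : lowerCentralSeries (⊤ : Subgroup V) (k + 1) = ⁅lowerCentralSeries (⊤ : Subgroup V) k, (⊤ : Subgroup V)⁆ := rfl
    rw [hγ]
    simp only
    rw [h1, Subgroup.map_commutator, ← MonoidHom.range_eq_map, Subgroup.range_subtype]
  -- `γ k` is never contained in `W`, since `V/W` is not nilpotent
  have hγnotW : ∀ k, ¬ γ k ≤ W := by
    intro k hle
    apply hnotnil
    refine nilpotent_iff_lowerCentralSeries.mpr ⟨k, ?_⟩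
    have h1 : lowerCentralSeries (⊤ : Subgroup V) k ≤ W.subgroupOf V := by
      intro x hx
      have : (x : U) ∈ γ k := ⟨x, hx, rfl⟩
      exact Subgroup.mem_subgroupOf.mpr (hle this)
    have h2 : lowerCentralSeries (⊤ : Subgroup (V ⧸ W.subgroupOf V)) k ≤
        Subgroup.map (QuotientGroup.mk' (W.subgroupOf V)) (lowerCentralSeries (⊤ : Subgroup V) k) :=
      lcs_le_map_of_surjective _ (QuotientGroup.mk'_surjective _) k
    have h3 : Subgroup.map (QuotientGroup.mk' (W.subgroupOf V)) (W.subgroupOf V) = ⊥ := by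
      refine (Subgroup.map_eq_bot_iff _).mpr ?_
      rw [QuotientGroup.ker_mk']
    refine le_bot_iff.mp ?_
    calc lowerCentralSeries (⊤ : Subgroup (V ⧸ W.subgroupOf V)) k
        ≤ Subgroup.map (QuotientGroup.mk' (W.subgroupOf V)) (lowerCentralSeries (⊤ : Subgroup V) k) := h2
      _ ≤ Subgroup.map (QuotientGroup.mk' (W.subgroupOf V)) (W.subgroupOf V) :=
          Subgroup.map_mono h1
      _ = ⊥ := h3
  -- the index type of all admissible `L`
  set ι := {L : Subgroup U // L.Normal ∧ IsClosed (L : Set U) ∧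
    (V : Set U) ⊆ (L : Set U) * (W : Set U)} with hι
  have hsub : ∀ i : ι, V ≤ i.1 ⊔ W := by
    intro i v hv
    have h := i.2.2.2 hv
    haveI := i.2.1
    rwa [← Subgroup.mul_normal, SetLike.mem_coe] at h
  refine ⟨⨅ i : ι, i.1, ?_, ?_, ?_, ?_⟩
  · exact normal_iInf' _ fun i => i.2.1
  · rw [Subgroup.coe_iInf]
    exact isClosed_iInter fun i => i.2.2.1
  · -- compactness argument
    haveI : CompactSpace V := isCompact_iff_compactSpace.mp hVc.isCompact
    set s : Set U := Subtype.val '' {v : V | (v : U) ∈ W}ᶜ with hs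
    have hscomp : IsCompact s :=
      (hWopen.isClosed_compl.isCompact).image continuous_subtype_val
    have hfin : ∀ u : Finset ι, (s ∩ ⋂ i ∈ u, (i.1 : Set U)).Nonempty := by
      intro u
      -- find k with γ k ≤ (⨅ i ∈ u, i.1) ⊔ W
      have key : ∃ k : ℕ, γ k ≤ (⨅ i ∈ u, i.1) ⊔ W := by
        classical
        induction u using Finset.induction_on with
        | empty => exact ⟨0, by simp⟩
        | @insert a u ha ih =>
            obtain ⟨k, hk⟩ := ih
            refine ⟨k + 1, ?_⟩
            have hKnorm : (⨅ i ∈ u, (i : ι).1).Normal := by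
              refine normal_iInf' _ fun i => ?_
              exact normal_iInf' _ fun _ => i.2.1
            have step : ⁅γ k, V⁆ ≤ ((⨅ i ∈ u, (i : ι).1) ⊓ a.1) ⊔ W := by
              refine le_trans (Subgroup.commutator_mono hk (hsub a)) ?_
              exact commutator_sup_sup_le _ _ _ hKnorm a.2.1 hW
            rw [hγsucc k]
            refine step.trans ?_
            rw [Finset.iInf_insert]
            rw [inf_comm]
        -- end
      obtain ⟨k, hk⟩ := key
      obtain ⟨x, hxγ, hxW⟩ := SetLike.not_le_iff_exists.mp (hγnotW k)
      have hx' : x ∈ ((⨅ i ∈ u, (i : ι).1) ⊔ W : Subgroup U) := hk hxγ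
      rw [← SetLike.mem_coe, Subgroup.mul_normal] at hx'
      obtain ⟨y, hy, w, hw, hxy⟩ := hx'
      have hyV : y ∈ V := by
        have hxV : x ∈ V := hγV k hxγ
        have : y = x * w⁻¹ := by rw [← hxy]; group
        rw [this]
        exact V.mul_mem hxV (V.inv_mem (hWV hw))
      have hyW : y ∉ W := by
        intro hyW
        exact hxW (by rw [← hxy]; exact W.mul_mem hyW hw)
      refine ⟨y, ⟨⟨y, hyV⟩, hyW, rfl⟩, ?_⟩
      rw [Set.mem_iInter₂]
      intro i hi
      have := Subgroup.mem_iInf.mp hy i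
      exact SetLike.mem_coe.mpr (Subgroup.mem_iInf.mp this hi)
    obtain ⟨x, hxs, hxint⟩ :=
      hscomp.inter_iInter_nonempty (fun i : ι => (i.1 : Set U)) (fun i => i.2.2.1) hfin
    obtain ⟨⟨v, hvV⟩, hvW, rfl⟩ := hxs
    intro hle
    refine hvW ?_
    refine hle ?_
    rw [Subgroup.mem_iInf]
    intro i
    exact Set.mem_iInter.mp hxint i
  · intro L hLn hLc hLsub
    exact iInf_le (fun i : ι => i.1) ⟨L, hLn, hLc, hLsub⟩
end

section
/- Let U be a non-trivial profinite group whose Mel'nikov subgroup M(U) has finite index in U, and let H be a closed normal subgroup of U such that the quasi-centraliser QC_U(H) is dense in U. Then H ∩ Z(U) has finite index in H, where Z(U) is the centre of U. -/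
open scoped Pointwise


/-- The Mel'nikov subgroup of a topological group: the intersection of all open normal
subgroups `V` such that the quotient `U/V` is a simple group. -/
def melnikovSubgroup (U : Type*) [Group U] [TopologicalSpace U] : Subgroup U :=
  ⨅ V ∈ {V : Subgroup U | IsOpen (V : Set U) ∧ ∃ hn : V.Normal,
    @IsSimpleGroup (U ⧸ V) (@QuotientGroup.Quotient.group U _ V hn)},
    V

section Aux

variable {U : Type*} [Group U] [TopologicalSpace U] [IsTopologicalGroup U]

/-- The centralizer of any set in a `T2` topological group is closed. -/
lemma aux_isClosed_centralizer [T2Space U] (s : Set U) :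
    IsClosed ((Subgroup.centralizer s : Subgroup U) : Set U) := by
  have h : ((Subgroup.centralizer s : Subgroup U) : Set U) =
      ⋂ h ∈ s, {x : U | h * x = x * h} := by
    ext x
    simp only [SetLike.mem_coe, Subgroup.mem_centralizer_iff, Set.mem_iInter, Set.mem_setOf_eq]
  rw [h]
  exact isClosed_biInter fun h _ =>
    isClosed_eq (continuous_const.mul continuous_id) (continuous_id.mul continuous_const)

/-- The centralizer of a normal subgroup is normal. -/
lemma aux_centralizer_normal {N : Subgroup U} (hN : N.Normal) :
    (Subgroup.centralizer (N : Set U)).Normal := by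
  constructor
  intro c hc g
  rw [Subgroup.mem_centralizer_iff] at hc ⊢
  intro h hh
  have h1 : g⁻¹ * h * g ∈ N := by
    have := hN.conj_mem h hh g⁻¹
    simpa using this
  have h2 := hc _ h1
  calc h * (g * c * g⁻¹) = g * ((g⁻¹ * h * g) * c) * g⁻¹ := by group
    _ = g * (c * (g⁻¹ * h * g)) * g⁻¹ := by rw [h2]
    _ = (g * c * g⁻¹) * h := by group

/-- There are only finitely many subgroups containing a fixed finite-index subgroup. -/
lemma aux_finite_subgroups_above {G : Type*} [Group G] (M : Subgroup G) (h : M.index ≠ 0) :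
    {V : Subgroup G | M ≤ V}.Finite := by
  haveI : M.FiniteIndex := ⟨h⟩
  haveI : Finite (G ⧸ M) := M.finite_quotient_of_finiteIndex
  have key : ∀ (A : Subgroup G), M ≤ A → ∀ x : G,
      x ∈ A ↔ (QuotientGroup.mk x : G ⧸ M) ∈ QuotientGroup.mk '' (A : Set G) := by
    intro A hA x
    constructor
    · exact fun hx => ⟨x, hx, rfl⟩
    · rintro ⟨y, hy, hxy⟩
      have : y⁻¹ * x ∈ M := QuotientGroup.eq.mp hxy
      have : x = y * (y⁻¹ * x) := by group
      rw [this]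
      exact A.mul_mem hy (hA ‹y⁻¹ * x ∈ M›)
  have hinj : Set.InjOn (fun V : Subgroup G => (QuotientGroup.mk '' (V : Set G) : Set (G ⧸ M)))
      {V : Subgroup G | M ≤ V} := by
    intro V hV W hW hEq
    ext x
    rw [key V hV x, key W hW x]
    simp only at hEq
    rw [hEq]
  exact Set.Finite.of_finite_image (Set.toFinite _) hinj

/-- Every proper closed normal subgroup of a nontrivial profinite group is contained in an
open normal subgroup with simple quotient. -/
lemma aux_exists_simple_quotient_above [CompactSpace U] [TotallyDisconnectedSpace U] [T2Space U]
    {N : Subgroup U} (hNc : IsClosed (N : Set U)) (hNn : N.Normal) (hN : N ≠ ⊤) :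
    ∃ V : Subgroup U, IsOpen (V : Set U) ∧ N ≤ V ∧
      ∃ hn : V.Normal, @IsSimpleGroup (U ⧸ V) (@QuotientGroup.Quotient.group U _ V hn) := by
  obtain ⟨u, hu⟩ : ∃ u : U, u ∉ N := by
    by_contra hcon
    push_neg at hcon
    exact hN (Subgroup.eq_top_iff' N |>.mpr hcon)
  -- the closed set N·u misses 1
  set T : Set U := (fun y => y * u) '' (N : Set U) with hT
  have hTc : IsClosed T := (Homeomorph.mulRight u).isClosedMap _ hNc
  have h1T : (1 : U) ∉ T := by
    rintro ⟨n, hn, hnu⟩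
    apply hu
    have hnu' : n * u = 1 := hnu
    have h2 : u = n⁻¹ * (n * u) := by group
    rw [hnu', mul_one] at h2
    rw [h2]
    exact N.inv_mem hn
  obtain ⟨C, hC, h1C, hCT⟩ := compact_exists_isClopen_in_isOpen hTc.isOpen_compl h1T
  obtain ⟨O, hO⟩ := IsTopologicalGroup.exist_openNormalSubgroup_sub_clopen_nhds_of_one hC h1C
  -- K = N ⊔ O is open, normal, proper
  haveI hNn' : N.Normal := hNn
  set K : Subgroup U := N ⊔ O.toSubgroup with hK
  have hKopen : IsOpen (K : Set U) := Subgroup.isOpen_mono le_sup_right O.isOpen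
  haveI hKn : K.Normal := Subgroup.sup_normal N O.toSubgroup
  have huK : u ∉ K := by
    intro huK
    -- K = N * O since O is normal
    have : (K : Set U) = (N : Set U) * (O.toSubgroup : Set U) := by
      rw [hK]; exact Subgroup.mul_normal N O.toSubgroup
    have hmem : u ∈ (N : Set U) * (O.toSubgroup : Set U) := by
      rw [← this]; exact huK
    obtain ⟨n, hn, o, ho, hno⟩ := hmem
    have hoC : o ∈ C := hO ho
    have hoT : o ∈ T := ⟨n⁻¹, N.inv_mem hn, by rw [← hno]; group⟩
    exact hCT hoC hoT
  have hKtop : K ≠ ⊤ := fun h => huK (h ▸ Subgroup.mem_top u)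
  -- K has finite index
  haveI : Finite (U ⧸ K) := Subgroup.quotient_finite_of_isOpen K hKopen
  haveI : K.FiniteIndex := K.finiteIndex_of_finite_quotient
  -- take a maximal proper normal subgroup above K
  set F : Set (Subgroup U) := {V : Subgroup U | K ≤ V ∧ V ≠ ⊤ ∧ V.Normal} with hF
  have hFfin : F.Finite :=
    (aux_finite_subgroups_above K Subgroup.FiniteIndex.index_ne_zero).subset fun V hV => hV.1
  have hFne : F.Nonempty := ⟨K, le_refl K, hKtop, hKn⟩
  obtain ⟨V, hVF, hVmax⟩ := Set.Finite.exists_maximalFor id F hFfin hFne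
  obtain ⟨hKV, hVtop, hVn⟩ := hVF
  haveI : V.Normal := hVn
  have hVopen : IsOpen (V : Set U) := Subgroup.isOpen_mono hKV hKopen
  refine ⟨V, hVopen, le_trans le_sup_left hKV, hVn, ?_⟩
  -- U ⧸ V is a simple group
  obtain ⟨v, hv⟩ : ∃ v : U, v ∉ V := by
    by_contra hcon
    push_neg at hcon
    exact hVtop (Subgroup.eq_top_iff' V |>.mpr hcon)
  haveI : Nontrivial (U ⧸ V) := by
    refine ⟨QuotientGroup.mk v, 1, fun h => hv ?_⟩
    exact (QuotientGroup.eq_one_iff v).mp h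
  constructor
  intro P hPn
  set Q : Subgroup U := P.comap (QuotientGroup.mk' V) with hQ
  haveI hQn : Q.Normal := hPn.comap (QuotientGroup.mk' V)
  have hVQ : V ≤ Q := by
    intro x hx
    show QuotientGroup.mk' V x ∈ P
    have : QuotientGroup.mk' V x = 1 := (QuotientGroup.eq_one_iff x).mpr hx
    rw [this]
    exact P.one_mem
  have hPmap : P = Q.map (QuotientGroup.mk' V) :=
    (Subgroup.map_comap_eq_self_of_surjective (QuotientGroup.mk'_surjective V) P).symm
  by_cases hQtop : Q = ⊤
  · right
    rw [hPmap, hQtop]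
    exact Subgroup.map_top_of_surjective _ (QuotientGroup.mk'_surjective V)
  · left
    have hQF : Q ∈ F := ⟨le_trans hKV hVQ, hQtop, hQn⟩
    have : V = Q := le_antisymm hVQ (hVmax hQF hVQ)
    rw [hPmap, ← this]
    rw [Subgroup.map_eq_bot_iff]
    rw [QuotientGroup.ker_mk']

end Aux

/-- Let `U` be a non-trivial profinite group whose Mel'nikov subgroup has
finite index, and let `H` be a closed normal subgroup whose quasi-centraliser
`QC_U(H) = ⋃_W C_U(H ∩ W)` (union over open subgroups `W`) is dense in `U`. Then
`H ∩ Z(U)` has finite index in `H`. -/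
theorem finite_index_center_of_dense_quasiCentralizer
    (U : Type*) [Group U] [TopologicalSpace U] [IsTopologicalGroup U]
    [CompactSpace U] [TotallyDisconnectedSpace U] [T2Space U] [Nontrivial U]
    (hMel : (melnikovSubgroup U).index ≠ 0)
    (H : Subgroup U) (hHn : H.Normal) (hHc : IsClosed (H : Set U))
    (hQC : Dense {x : U | ∃ W : Subgroup U, IsOpen (W : Set U) ∧
      x ∈ Subgroup.centralizer ((H ⊓ W : Subgroup U) : Set U)}) :
    (Subgroup.center U).relIndex H ≠ 0 := by
  classical
  -- the set of open normal subgroups with simple quotient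
  set 𝒱 : Set (Subgroup U) := {V : Subgroup U | IsOpen (V : Set U) ∧ ∃ hn : V.Normal,
    @IsSimpleGroup (U ⧸ V) (@QuotientGroup.Quotient.group U _ V hn)} with h𝒱
  have hMle : ∀ V ∈ 𝒱, melnikovSubgroup U ≤ V := fun V hV => iInf₂_le V hV
  have h𝒱fin : 𝒱.Finite :=
    (aux_finite_subgroups_above (melnikovSubgroup U) hMel).subset fun V hV => hMle V hV
  -- Key step: there is an open subgroup W with H ⊓ W ≤ Z(U)
  obtain ⟨W, hWopen, hWle⟩ :
      ∃ W : Subgroup U, IsOpen (W : Set U) ∧ (H ⊓ W : Subgroup U) ≤ Subgroup.center U := by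
    by_contra hno
    push_neg at hno
    -- the "bad" simple-quotient subgroups
    set S : Set (Subgroup U) := {V ∈ 𝒱 | ∃ W : Subgroup U, IsOpen (W : Set U) ∧ W.Normal ∧
        ¬ Subgroup.centralizer ((H ⊓ W : Subgroup U) : Set U) ≤ V} with hS
    have hSfin : S.Finite := h𝒱fin.subset fun V hV => hV.1
    -- produce a single open normal W₀ escaping all bad subgroups
    have hfinset : ∀ (F : Finset (Subgroup U)),
        (∀ V ∈ F, ∃ W : Subgroup U, IsOpen (W : Set U) ∧ W.Normal ∧
          ¬ Subgroup.centralizer ((H ⊓ W : Subgroup U) : Set U) ≤ V) →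
        ∃ W : Subgroup U, IsOpen (W : Set U) ∧ W.Normal ∧ ∀ V ∈ F,
          ¬ Subgroup.centralizer ((H ⊓ W : Subgroup U) : Set U) ≤ V := by
      intro F
      induction F using Finset.induction_on with
      | empty =>
          intro _
          exact ⟨⊤, by simpa using isOpen_univ, inferInstance, fun V hV => absurd hV (by simp)⟩
      | @insert V F hVF ih =>
          intro hall
          obtain ⟨W1, hW1o, hW1n, hW1⟩ := hall V (Finset.mem_insert_self V F)
          obtain ⟨W2, hW2o, hW2n, hW2⟩ := ih fun V' hV' =>
            hall V' (Finset.mem_insert_of_mem hV')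
          haveI := hW1n; haveI := hW2n
          refine ⟨W1 ⊓ W2, ?_, Subgroup.normal_inf_normal W1 W2, ?_⟩
          · rw [Subgroup.coe_inf]; exact hW1o.inter hW2o
          · intro V' hV' hle
            have hmono : ∀ (Wb : Subgroup U), W1 ⊓ W2 ≤ Wb →
                Subgroup.centralizer ((H ⊓ Wb : Subgroup U) : Set U) ≤
                Subgroup.centralizer ((H ⊓ (W1 ⊓ W2) : Subgroup U) : Set U) := by
              intro Wb hWb
              apply Subgroup.centralizer_le
              exact SetLike.coe_subset_coe.mpr (inf_le_inf_left H hWb)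
            rcases Finset.mem_insert.mp hV' with rfl | hV'F
            · exact hW1 (le_trans (hmono W1 inf_le_left) hle)
            · exact hW2 V' hV'F (le_trans (hmono W2 inf_le_right) hle)
    obtain ⟨W₀, hW₀o, hW₀n, hW₀⟩ := hfinset hSfin.toFinset
      (fun V hV => ((Set.Finite.mem_toFinset hSfin).mp hV).2)
    haveI := hW₀n
    set C : Subgroup U := Subgroup.centralizer ((H ⊓ W₀ : Subgroup U) : Set U) with hC
    have hCtop : C ≠ ⊤ := by
      intro h
      exact hno W₀ hW₀o (Subgroup.centralizer_eq_top_iff_subset.mp h)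
    have hCclosed : IsClosed (C : Set U) := aux_isClosed_centralizer _
    haveI hHWn : (H ⊓ W₀).Normal := Subgroup.normal_inf_normal H W₀
    have hCn : C.Normal := aux_centralizer_normal hHWn
    obtain ⟨V₀, hV₀o, hCV₀, hV₀n, hV₀simple⟩ :=
      aux_exists_simple_quotient_above hCclosed hCn hCtop
    have hV₀𝒱 : V₀ ∈ 𝒱 := ⟨hV₀o, hV₀n, hV₀simple⟩
    -- V₀ is not bad, so every centralizer of H ⊓ (open normal) lands in V₀
    have hV₀S : V₀ ∉ S := by
      intro hmem
      exact hW₀ V₀ ((Set.Finite.mem_toFinset hSfin).mpr hmem) hCV₀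
    have hall : ∀ W : Subgroup U, IsOpen (W : Set U) → W.Normal →
        Subgroup.centralizer ((H ⊓ W : Subgroup U) : Set U) ≤ V₀ := by
      intro W hWo hWn
      by_contra hcon
      exact hV₀S ⟨hV₀𝒱, W, hWo, hWn, hcon⟩
    -- the quasi-centralizer is contained in V₀
    have hQCsub : {x : U | ∃ W : Subgroup U, IsOpen (W : Set U) ∧
        x ∈ Subgroup.centralizer ((H ⊓ W : Subgroup U) : Set U)} ⊆ (V₀ : Set U) := by
      rintro x ⟨W, hWo, hx⟩
      have hWclopen : IsClopen (W : Set U) := ⟨Subgroup.isClosed_of_isOpen W hWo, hWo⟩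
      obtain ⟨O, hO⟩ :=
        IsTopologicalGroup.exist_openNormalSubgroup_sub_clopen_nhds_of_one hWclopen W.one_mem
      have hOW : O.toSubgroup ≤ W := fun y hy => hO hy
      have hsub : Subgroup.centralizer ((H ⊓ W : Subgroup U) : Set U) ≤
          Subgroup.centralizer ((H ⊓ O.toSubgroup : Subgroup U) : Set U) := by
        apply Subgroup.centralizer_le
        exact SetLike.coe_subset_coe.mpr (inf_le_inf_left H hOW)
      exact hall O.toSubgroup O.isOpen O.isNormal' (hsub hx) 
    -- density gives V₀ = ⊤, contradicting simplicity
    have hV₀closed : IsClosed (V₀ : Set U) := Subgroup.isClosed_of_isOpen V₀ hV₀o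
    have hV₀univ : (V₀ : Set U) = Set.univ := by
      apply Set.eq_univ_of_univ_subset
      calc Set.univ = closure {x : U | ∃ W : Subgroup U, IsOpen (W : Set U) ∧
            x ∈ Subgroup.centralizer ((H ⊓ W : Subgroup U) : Set U)} := hQC.closure_eq.symm
        _ ⊆ closure (V₀ : Set U) := closure_mono hQCsub
        _ = (V₀ : Set U) := hV₀closed.closure_eq
    have hV₀top : V₀ = ⊤ := by
      rw [Subgroup.eq_top_iff']
      intro x
      have : x ∈ (V₀ : Set U) := hV₀univ ▸ Set.mem_univ x
      exact this
    haveI := hV₀n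
    haveI := hV₀simple
    haveI : Nontrivial (U ⧸ V₀) := IsSimpleGroup.toNontrivial
    rw [hV₀top] at this
    haveI := QuotientGroup.subsingleton_quotient_top (G := U)
    exact false_of_nontrivial_of_subsingleton (U ⧸ (⊤ : Subgroup U))
  -- Conclude: W.subgroupOf H has finite index in H, and lies in the center's subgroupOf
  haveI : CompactSpace H := isCompact_iff_compactSpace.mp hHc.isCompact
  have hWHopen : IsOpen ((W.subgroupOf H : Subgroup H) : Set H) := by
    rw [Subgroup.subgroupOf, Subgroup.coe_comap]
    exact hWopen.preimage continuous_subtype_val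
  haveI : Finite (H ⧸ W.subgroupOf H) := Subgroup.quotient_finite_of_isOpen _ hWHopen
  haveI : (W.subgroupOf H).FiniteIndex := (W.subgroupOf H).finiteIndex_of_finite_quotient
  have hle : W.subgroupOf H ≤ (Subgroup.center U).subgroupOf H := by
    intro x hx
    rw [Subgroup.mem_subgroupOf] at hx ⊢
    exact hWle ⟨x.2, hx⟩
  have hdvd := Subgroup.index_dvd_of_le hle
  rw [Subgroup.relIndex]
  intro h0
  rw [h0] at hdvd
  exact Subgroup.FiniteIndex.index_ne_zero (H := W.subgroupOf H) (zero_dvd_iff.mp hdvd)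
end

section
/- Let Ω be a non-empty compact, totally disconnected, Hausdorff topological space and let G be a group acting on Ω by homeomorphisms such that every G-orbit is dense in Ω. Suppose there exist g ∈ G and a clopen subset α of Ω such that the image gα is strictly contained in α. Then there is no G-invariant regular Borel probability measure on Ω. (This is the content of the paper's proposition that a t.d.l.c. group acting minimally on the Stone space of a Boolean algebra with a skewering element cannot be amenable.) -/
open MeasureTheory

/-- Let `Ω` be a non-empty profinite space and `G` a group acting on `Ω` by
homeomorphisms with every orbit dense. If some `g ∈ G` maps a clopen set `α` strictly inside
itself, then there is no `G`-invariant regular Borel probability measure on `Ω`. -/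
theorem no_invariant_measure_of_skewering
    (Ω : Type*) [TopologicalSpace Ω] [CompactSpace Ω]
    [TotallyDisconnectedSpace Ω] [T2Space Ω] [Nonempty Ω]
    [MeasurableSpace Ω] [BorelSpace Ω]
    (G : Type*) [Group G] [MulAction G Ω]
    (hcont : ∀ g : G, Continuous fun x : Ω => g • x)
    (hmin : ∀ x : Ω, Dense (MulAction.orbit G x))
    (hskew : ∃ g : G, ∃ α : Set Ω, IsClopen α ∧ (fun x => g • x) '' α ⊂ α) :
    ¬ ∃ μ : Measure Ω, IsProbabilityMeasure μ ∧ μ.Regular ∧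
      ∀ g : G, ∀ A : Set Ω, MeasurableSet A → μ ((fun x => g • x) '' A) = μ A := by
  rintro ⟨μ, hprob, hreg, hinv⟩
  obtain ⟨g, α, hα, hsub⟩ := hskew
  -- g • α is compact, hence closed
  have hgα_compact : IsCompact ((fun x => g • x) '' α) :=
    (hα.1.isCompact).image (hcont g)
  have hgα_closed : IsClosed ((fun x => g • x) '' α) := hgα_compact.isClosed
  -- U = α \ gα is open, nonempty, measurable, with μ U = 0
  set U : Set Ω := α \ (fun x => g • x) '' α with hU
  have hUopen : IsOpen U := hα.2.sdiff hgα_closed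
  have hUne : U.Nonempty := Set.nonempty_of_ssubset hsub
  have hUmeas : MeasurableSet U :=
    hα.2.measurableSet.diff hgα_closed.measurableSet
  have hμU : μ U = 0 := by
    have h1 : μ ((fun x => g • x) '' α) = μ α := hinv g α hα.2.measurableSet
    have h2 : μ ((fun x => g • x) '' α) + μ U = μ α := by
      rw [hU, measure_add_diff hgα_closed.measurableSet.nullMeasurableSet α,
        Set.union_eq_self_of_subset_left hsub.subset]
    rw [h1] at h2
    have h3 : μ α + μ U = μ α + 0 := by rw [add_zero]; exact h2
    exact WithTop.add_left_cancel (measure_ne_top μ α) h3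
  -- translates of U are open and cover Ω
  have himg : ∀ h : G, (fun x => h • x) '' U = (fun x => h⁻¹ • x) ⁻¹' U := by
    intro h
    ext x
    constructor
    · rintro ⟨y, hy, rfl⟩; simpa using hy
    · intro hx; exact ⟨h⁻¹ • x, hx, by simp⟩
  have hopen : ∀ h : G, IsOpen ((fun x => h • x) '' U) := fun h =>
    (himg h) ▸ (hUopen.preimage (hcont h⁻¹))
  have hcover : Set.univ ⊆ ⋃ h : G, (fun x => h • x) '' U := by
    intro y _
    obtain ⟨z, hz, hzU⟩ := (hmin y).exists_mem_open hUopen hUne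
    obtain ⟨h, rfl⟩ := hz
    exact Set.mem_iUnion.mpr ⟨h⁻¹, h • y, hzU, by simp⟩
  obtain ⟨s, hs⟩ := isCompact_univ.elim_finite_subcover
    (fun h : G => (fun x => h • x) '' U) hopen hcover
  -- each translate has measure 0
  have hμtrans : ∀ h : G, μ ((fun x => h • x) '' U) = 0 := fun h => by
    rw [hinv h U hUmeas]; exact hμU
  have : μ Set.univ = 0 := by
    refine le_antisymm ?_ zero_le
    calc μ Set.univ ≤ μ (⋃ h ∈ s, (fun x => h • x) '' U) := measure_mono hs
      _ ≤ ∑ h ∈ s, μ ((fun x => h • x) '' U) := measure_biUnion_finset_le s _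
      _ = 0 := by simp [hμtrans]
  simp [measure_univ] at this
end
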